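/- arXiv:1103.4729 — 15 statements merged into one kernel-verified Lean document; each statement's English description precedes it below -/
import Mathlib

section
/- Let G be a finite group and let p be a prime such that O_p(G) = 1. If G has a unique minimal normal subgroup, then there exists a finite-dimensional simple F_p[G]-module that is faithful for G. -/
section Aux

variable {G : Type*} [Group G] [Finite G] {p : ℕ} [Fact p.Prime]

/-- Every nontrivial normal subgroup of a finite group contains a minimal normal subgroup. -/
theorem aux_exists_minimal_normal_le (n : ℕ) :
    ∀ (K : Subgroup G), Nat.card K ≤ n → K.Normal → K ≠ ⊥ →
    ∃ M : Subgroup G, M ≤ K ∧ M ≠ ⊥ ∧ M.Normal ∧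
      ∀ L : Subgroup G, L.Normal → L ≤ M → L = ⊥ ∨ L = M := by
  induction n using Nat.strong_induction_on with
  | _ n ih =>
    intro K hcard hKn hKbot
    by_cases h : ∀ L : Subgroup G, L.Normal → L ≤ K → L = ⊥ ∨ L = K
    · exact ⟨K, le_refl K, hKbot, hKn, h⟩
    · push_neg at h
      obtain ⟨L, hLn, hLK, hLbot, hLne⟩ := h
      have hlt : Nat.card L < Nat.card K := by
        rw [← SetLike.coe_sort_coe L, ← SetLike.coe_sort_coe K,
          Nat.card_coe_set_eq, Nat.card_coe_set_eq]
        exact Set.ncard_lt_ncard (SetLike.coe_ssubset_coe.mpr (lt_of_le_of_ne hLK hLne))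
          (Set.toFinite _)
      obtain ⟨M, hM1, hM2, hM3, hM4⟩ :=
        ih (Nat.card L) (lt_of_lt_of_le hlt hcard) L le_rfl hLn hLbot
      exact ⟨M, le_trans hM1 hLK, hM2, hM3, hM4⟩

end Aux

section Aux2

variable {G : Type*} [Group G] {p : ℕ} [Fact p.Prime]

/-- Transport a finite simple faithful representation to `Type 0`. -/
theorem aux_transport (V : Type*) [AddCommGroup V] [Module (ZMod p) V] [Finite V]
    (ρ : Representation (ZMod p) G V) (hnt : Nontrivial V)
    (hsimp : ∀ W : Submodule (ZMod p) V, (∀ g : G, ∀ v ∈ W, ρ g v ∈ W) → W = ⊥ ∨ W = ⊤)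
    (hfaith : ∀ g : G, ρ g = 1 → g = 1) :
    ∃ (V₀ : Type) (_ : AddCommGroup V₀) (_ : Module (ZMod p) V₀)
      (ρ₀ : Representation (ZMod p) G V₀),
      Module.Finite (ZMod p) V₀ ∧ Nontrivial V₀ ∧
      (∀ W : Submodule (ZMod p) V₀, (∀ g : G, ∀ v ∈ W, ρ₀ g v ∈ W) →
        W = ⊥ ∨ W = ⊤) ∧
      (∀ g : G, ρ₀ g = 1 → g = 1) := by
  have : Module.Finite (ZMod p) V := Module.Finite.of_finite
  set n := Module.finrank (ZMod p) V with hn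
  let b := Module.finBasis (ZMod p) V
  let e : V ≃ₗ[ZMod p] (Fin n → ZMod p) := b.equivFun
  refine ⟨Fin n → ZMod p, inferInstance, inferInstance,
    { toFun := fun g => (e.conj (ρ g) : (Fin n → ZMod p) →ₗ[ZMod p] (Fin n → ZMod p))
      map_one' := ?_
      map_mul' := ?_ }, inferInstance, e.symm.toEquiv.nontrivial, ?_, ?_⟩
  · ext x
    simp [LinearEquiv.conj_apply]
  · intro g h
    ext x
    simp [LinearEquiv.conj_apply, Module.End.mul_apply]
  · intro W hWinv
    have key : ∀ g : G, ∀ x : Fin n → ZMod p, e.conj (ρ g) x = e (ρ g (e.symm x)) := by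
      intro g x; simp [LinearEquiv.conj_apply]
    have hc := hsimp (W.comap (e : V →ₗ[ZMod p] (Fin n → ZMod p))) ?_
    · rcases hc with h | h
      · left
        rw [eq_bot_iff]
        intro x hx
        have hm : e.symm x ∈ Submodule.comap (e : V →ₗ[ZMod p] (Fin n → ZMod p)) W := by
          simpa using hx
        rw [h] at hm
        simp only [Submodule.mem_bot] at hm
        calc x = e (e.symm x) := by simp
        _ = 0 := by rw [hm]; simp
      · right
        rw [eq_top_iff]
        intro x _
        have hm : e.symm x ∈ Submodule.comap (e : V →ₗ[ZMod p] (Fin n → ZMod p)) W := by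
          rw [h]; trivial
        simpa using hm
    · intro g v hv
      simp only [Submodule.mem_comap, LinearMap.coe_coe] at hv ⊢
      have := hWinv g (e v) hv
      simpa [key, e.symm_apply_apply] using this
  · intro g hg
    apply hfaith
    ext v
    have h1 : e.conj (ρ g) = 1 := hg
    have : e.conj (ρ g) (e v) = e v := by rw [h1]; rfl
    have h2 : e (ρ g v) = e v := by
      rw [← this]; simp [LinearEquiv.conj_apply]
    simpa using e.injective h2

end Aux2

universe v

section Aux3

variable {G : Type*} [Group G] [Finite G] {p : ℕ} [Fact p.Prime]

theorem aux_main
    (hOp : ∀ N : Subgroup G, N.Normal → IsPGroup p N → N = ⊥)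
    (hle : ∀ K : Subgroup G, K.Normal → K ≠ ⊥ →
      ∃ M : Subgroup G, M ≤ K ∧ M ≠ ⊥ ∧ M.Normal ∧
        ∀ L : Subgroup G, L.Normal → L ≤ M → L = ⊥ ∨ L = M)
    (hmin : ∃! N : Subgroup G, N ≠ ⊥ ∧ N.Normal ∧
      ∀ M : Subgroup G, M.Normal → M ≤ N → M = ⊥ ∨ M = N)
    (n : ℕ) :
    ∀ (V : Type v) (_ : AddCommGroup V) (_ : Module (ZMod p) V)
      (ρ : Representation (ZMod p) G V), Finite V → Nat.card V ≤ n → Nontrivial V →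
      (∀ g : G, ρ g = 1 → g = 1) →
      ∃ (V₀ : Type) (_ : AddCommGroup V₀) (_ : Module (ZMod p) V₀)
        (ρ₀ : Representation (ZMod p) G V₀),
        Module.Finite (ZMod p) V₀ ∧ Nontrivial V₀ ∧
        (∀ W : Submodule (ZMod p) V₀, (∀ g : G, ∀ v ∈ W, ρ₀ g v ∈ W) →
          W = ⊥ ∨ W = ⊤) ∧
        (∀ g : G, ρ₀ g = 1 → g = 1) := by
  induction n using Nat.strong_induction_on with
  | _ n ih =>
    intro V _ _ ρ hfin hcard hnt hfaith
    by_cases hs : ∀ W : Submodule (ZMod p) V, (∀ g : G, ∀ v ∈ W, ρ g v ∈ W) →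
        W = ⊥ ∨ W = ⊤
    · exact aux_transport V ρ hnt hs hfaith
    · push_neg at hs
      obtain ⟨W, hWinv, hWbot, hWtop⟩ := hs
      -- the two kernels
      let K₁ : Subgroup G :=
        { carrier := {g : G | ∀ w ∈ W, ρ g w = w}
          one_mem' := by intro w _; simp
          mul_mem' := by
            intro a b ha hb w hw
            have : ρ (a * b) w = ρ a (ρ b w) := by rw [map_mul]; rfl
            rw [this, hb w hw, ha w hw]
          inv_mem' := by
            intro a ha w hw
            have : ρ a⁻¹ (ρ a w) = w := by
              rw [← Module.End.mul_apply, ← map_mul, inv_mul_cancel, map_one]; rfl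
            rw [ha w hw] at this
            exact this }
      let K₂ : Subgroup G :=
        { carrier := {g : G | ∀ v : V, ρ g v - v ∈ W}
          one_mem' := by intro v; simp
          mul_mem' := by
            intro a b ha hb v
            have h1 : ρ (a * b) v - v = (ρ a (ρ b v) - ρ b v) + (ρ b v - v) := by
              rw [map_mul]; simp [Module.End.mul_apply]
            rw [h1]
            exact W.add_mem (ha (ρ b v)) (hb v)
          inv_mem' := by
            intro a ha v
            have h0 : ρ a (ρ a⁻¹ v) = v := by
              rw [← Module.End.mul_apply, ← map_mul, mul_inv_cancel, map_one]; rfl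
            have h1 : ρ a⁻¹ v - v = -(ρ a (ρ a⁻¹ v) - ρ a⁻¹ v) := by rw [h0]; abel
            rw [h1]
            exact W.neg_mem (ha (ρ a⁻¹ v)) }
      have hK1n : K₁.Normal := by
        constructor
        intro g hg h w hw
        have hmem : ρ h⁻¹ w ∈ W := hWinv h⁻¹ w hw
        have : ρ (h * g * h⁻¹) w = ρ h (ρ g (ρ h⁻¹ w)) := by
          rw [map_mul, map_mul]; simp [Module.End.mul_apply]
        rw [this, hg _ hmem, ← Module.End.mul_apply, ← map_mul, mul_inv_cancel, map_one]
        rfl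
      have hK2n : K₂.Normal := by
        constructor
        intro g hg h v
        have h0 : ρ h (ρ h⁻¹ v) = v := by
          rw [← Module.End.mul_apply, ← map_mul, mul_inv_cancel, map_one]; rfl
        have h1 : ρ (h * g * h⁻¹) v - v = ρ h (ρ g (ρ h⁻¹ v) - ρ h⁻¹ v) := by
          rw [map_mul, map_mul, map_sub]
          simp [Module.End.mul_apply, h0]
        rw [h1]
        exact hWinv h _ (hg (ρ h⁻¹ v))
      have hK12n : (K₁ ⊓ K₂).Normal := by
        constructor
        intro g hg h
        rw [Subgroup.mem_inf] at hg ⊢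
        exact ⟨hK1n.conj_mem g hg.1 h, hK2n.conj_mem g hg.2 h⟩
      -- K₁ ⊓ K₂ is a p-group
      have hpgrp : IsPGroup p ↥(K₁ ⊓ K₂) := by
        intro g
        refine ⟨1, ?_⟩
        have hg12 := g.2
        rw [Subgroup.mem_inf] at hg12
        obtain ⟨hg1, hg2⟩ := hg12
        have key : ∀ (m : ℕ) (v : V), (ρ (g : G) ^ m) v = v + m • (ρ (g : G) v - v) := by
          intro m
          induction m with
          | zero => intro v; simp
          | succ m ihm =>
            intro v
            have hstep : (ρ (g : G) ^ (m + 1)) v = (ρ (g : G) ^ m) (ρ (g : G) v) := by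
              rw [pow_succ, Module.End.mul_apply]
            rw [hstep, ihm (ρ (g : G) v)]
            have hfix : ρ (g : G) (ρ (g : G) v) - ρ (g : G) v = ρ (g : G) v - v := by
              have : ρ (g : G) (ρ (g : G) v - v) = ρ (g : G) v - v := hg1 _ (hg2 v)
              rw [map_sub] at this
              exact this
            rw [hfix, succ_nsmul]
            abel
        have hpow : ρ ((g : G) ^ p) = 1 := by
          rw [map_pow]
          ext v
          rw [Module.End.one_apply, key p v]
          have : (p : ℕ) • (ρ (g : G) v - v) = 0 := by
            rw [← Nat.cast_smul_eq_nsmul (ZMod p), ZMod.natCast_self, zero_smul]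
          rw [this, add_zero]
        have : ((g : G)) ^ p = 1 := hfaith _ hpow
        rw [pow_one]
        exact Subtype.ext (by rw [Subgroup.coe_pow, this]; rfl)
      have h12bot : K₁ ⊓ K₂ = ⊥ := hOp _ hK12n hpgrp
      -- one of the kernels is trivial
      obtain ⟨N, ⟨hNbot, hNnorm, hNmin⟩, hNuniq⟩ := hmin
      have hNle : ∀ K : Subgroup G, K.Normal → K ≠ ⊥ → N ≤ K := by
        intro K hKn hKbot
        obtain ⟨M, hMK, hMbot, hMn, hMmin⟩ := hle K hKn hKbot
        have : M = N := hNuniq M ⟨hMbot, hMn, hMmin⟩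
        rw [← this]
        exact hMK
      have hker : K₁ = ⊥ ∨ K₂ = ⊥ := by
        by_contra hcon
        push_neg at hcon
        have hN12 : N ≤ K₁ ⊓ K₂ :=
          le_inf (hNle K₁ hK1n hcon.1) (hNle K₂ hK2n hcon.2)
        rw [h12bot, le_bot_iff] at hN12
        exact hNbot hN12
      rcases hker with hk | hk
      · -- restrict to W
        have hWnt : Nontrivial ↥W := Submodule.nontrivial_iff_ne_bot.mpr hWbot
        have hWcard : Nat.card ↥W < Nat.card V := by
          rw [← SetLike.coe_sort_coe W, Nat.card_coe_set_eq, ← Set.ncard_univ V]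
          refine Set.ncard_lt_ncard ?_ (Set.toFinite _)
          rw [Set.ssubset_univ_iff]
          intro h
          apply hWtop
          apply Submodule.eq_top_iff'.mpr
          intro x
          show x ∈ (W : Set V)
          rw [h]
          trivial
        let ρW : Representation (ZMod p) G ↥W :=
          { toFun := fun g => (ρ g).restrict (fun x hx => hWinv g x hx)
            map_one' := by
              ext x
              simp [LinearMap.restrict_apply]
            map_mul' := by
              intro a b
              ext x
              simp [LinearMap.restrict_apply, Module.End.mul_apply] }
        have hρWfaith : ∀ g : G, ρW g = 1 → g = 1 := by
          intro g hg
          have hgK1 : g ∈ K₁ := by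
            intro w hw
            have := congrArg Subtype.val (LinearMap.congr_fun hg ⟨w, hw⟩)
            simpa [ρW, LinearMap.restrict_apply] using this
          rw [hk] at hgK1
          exact Subgroup.mem_bot.mp hgK1
        exact ih (Nat.card ↥W) (lt_of_lt_of_le hWcard hcard) ↥W _ _ ρW
          inferInstance le_rfl hWnt hρWfaith
      · -- pass to the quotient
        have hQfin : Finite (V ⧸ W) := Finite.of_surjective _ (Submodule.Quotient.mk_surjective W)
        have hQnt : Nontrivial (V ⧸ W) := Submodule.Quotient.nontrivial_iff.mpr hWtop
        have hQcard : Nat.card (V ⧸ W) < Nat.card V := by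
          have h1 := Submodule.card_eq_card_quotient_mul_card W
          have hW2 : 1 < Nat.card ↥W := Finite.one_lt_card_iff_nontrivial.mpr
            (Submodule.nontrivial_iff_ne_bot.mpr hWbot)
          have hQpos : 0 < Nat.card (V ⧸ W) := Nat.card_pos
          rw [h1]
          exact lt_mul_iff_one_lt_left hQpos |>.mpr hW2
        let ρQ : Representation (ZMod p) G (V ⧸ W) :=
          { toFun := fun g => W.mapQ W (ρ g) (fun x hx => hWinv g x hx)
            map_one' := by
              apply LinearMap.ext
              intro x
              obtain ⟨v, rfl⟩ := Submodule.Quotient.mk_surjective W x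
              simp [Submodule.mapQ_apply]
            map_mul' := by
              intro a b
              apply LinearMap.ext
              intro x
              obtain ⟨v, rfl⟩ := Submodule.Quotient.mk_surjective W x
              simp [Submodule.mapQ_apply, Module.End.mul_apply] }
        have hρQfaith : ∀ g : G, ρQ g = 1 → g = 1 := by
          intro g hg
          have hgK2 : g ∈ K₂ := by
            intro v
            have h2 : W.mapQ W (ρ g) (fun x hx => hWinv g x hx) (Submodule.Quotient.mk v)
                = Submodule.Quotient.mk v := by
              have : ρQ g = 1 := hg
              rw [show W.mapQ W (ρ g) (fun x hx => hWinv g x hx) = ρQ g from rfl, this]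
              rfl
            rw [Submodule.mapQ_apply] at h2
            exact (Submodule.Quotient.eq W).mp h2
          rw [hk] at hgK2
          exact Subgroup.mem_bot.mp hgK2
        exact ih (Nat.card (V ⧸ W)) (lt_of_lt_of_le hQcard hcard) (V ⧸ W) _ _ ρQ
          hQfin le_rfl hQnt hρQfaith

end Aux3

/-- If `G` is a finite group, `p` a prime with `O_p(G) = 1`
(i.e. every normal `p`-subgroup is trivial), and `G` has a unique minimal
normal subgroup, then there exists a finite-dimensional simple
`𝔽_p[G]`-module which is faithful for `G`. -/
theorem exists_faithful_simple_module
    (G : Type*) [Group G] [Finite G] (p : ℕ) [Fact p.Prime]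
    (hOp : ∀ N : Subgroup G, N.Normal → IsPGroup p N → N = ⊥)
    (hmin : ∃! N : Subgroup G, N ≠ ⊥ ∧ N.Normal ∧
      ∀ M : Subgroup G, M.Normal → M ≤ N → M = ⊥ ∨ M = N) :
    ∃ (V : Type) (_ : AddCommGroup V) (_ : Module (ZMod p) V)
      (ρ : Representation (ZMod p) G V),
      Module.Finite (ZMod p) V ∧ Nontrivial V ∧
      -- simplicity: the only `G`-invariant submodules are `⊥` and `⊤`
      (∀ W : Submodule (ZMod p) V, (∀ g : G, ∀ v ∈ W, ρ g v ∈ W) →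
        W = ⊥ ∨ W = ⊤) ∧
      -- faithfulness
      (∀ g : G, ρ g = 1 → g = 1) := by
  classical
  let ρ := Representation.ofMulAction (ZMod p) G G
  have hfin : Finite (MonoidAlgebra (ZMod p) G) :=
    Finite.of_equiv _ (Finsupp.equivFunOnFinite.symm.trans MonoidAlgebra.coeffEquiv.symm)
  have hnt : Nontrivial (MonoidAlgebra (ZMod p) G) := by
    refine ⟨⟨MonoidAlgebra.single 1 1, 0, fun h => ?_⟩⟩
    exact one_ne_zero (MonoidAlgebra.single_eq_zero.mp h)
  have hfaith : ∀ g : G, ρ g = 1 → g = 1 := by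
    intro g hg
    have h1 : ρ g (MonoidAlgebra.single (1 : G) (1 : ZMod p)) = MonoidAlgebra.single (1 : G) (1 : ZMod p) := by
      rw [hg]; rfl
    rw [Representation.ofMulAction_single] at h1
    rcases MonoidAlgebra.single_inj.mp h1 with ⟨ha, _⟩ | ⟨hb, _⟩
    · simpa using ha
    · exact absurd hb one_ne_zero
  exact aux_main hOp
    (fun K hKn hKb => aux_exists_minimal_normal_le (Nat.card K) K le_rfl hKn hKb)
    hmin (Nat.card (MonoidAlgebra (ZMod p) G)) (MonoidAlgebra (ZMod p) G) _ _ ρ hfin le_rfl hnt hfaith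
end

section
/- Let G be a finite group and L a normal subgroup of G contained in the Frattini subgroup Φ(G). If G/L has a normal Hall π-subgroup, then G has a normal Hall π-subgroup. -/
/-- A Hall `π`-subgroup: its order is a `π`-number and its index is a `π'`-number. -/
def IsHallSubgroup {G : Type*} [Group G] (π : Set ℕ) (H : Subgroup G) : Prop :=
  (∀ q : ℕ, q.Prime → q ∣ Nat.card H → q ∈ π) ∧
  (∀ q : ℕ, q.Prime → q ∣ H.index → q ∉ π)

open Subgroup MulAction Pointwise

section Auxiliary

/-- Cardinality of the preimage of a subgroup of a quotient. -/
theorem card_comap_mk' {G : Type*} [Group G] [Finite G] (L : Subgroup G) [L.Normal]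
    (H : Subgroup (G ⧸ L)) :
    Nat.card (H.comap (QuotientGroup.mk' L)) = Nat.card H * Nat.card L := by
  have hs : Function.Surjective (QuotientGroup.mk' L) := QuotientGroup.mk'_surjective L
  have h1 : (H.comap (QuotientGroup.mk' L)).index = H.index := index_comap_of_surjective _ hs
  have h2 := card_mul_index (H.comap (QuotientGroup.mk' L))
  have h3 := card_mul_index H
  have h4 := card_eq_card_quotient_mul_card_subgroup L
  have h5 : H.index ≠ 0 := Subgroup.index_ne_zero_of_finite
  apply Nat.eq_of_mul_eq_mul_right (Nat.pos_of_ne_zero h5)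
  calc Nat.card (H.comap (QuotientGroup.mk' L)) * H.index
      = Nat.card G := by rw [← h1, h2]
    _ = Nat.card H * H.index * Nat.card L := by rw [h4, h3]
    _ = Nat.card H * Nat.card L * H.index := by ring

/-- The image of the Frattini subgroup under a surjective homomorphism lands in
the Frattini subgroup. -/
theorem frattini_map_le' {G H : Type*} [Group G] [Group H] (φ : G →* H)
    (hφ : Function.Surjective φ) : (frattini G).map φ ≤ frattini H := by
  have key : ∀ M : Subgroup H, IsCoatom M → (frattini G).map φ ≤ M := by
    intro M hM
    have hc : IsCoatom (M.comap φ) := by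
      constructor
      · intro htop
        apply hM.1
        rw [← Subgroup.map_comap_eq_self_of_surjective hφ M, htop, ← MonoidHom.range_eq_map,
          MonoidHom.range_eq_top]
        exact hφ
      · intro S hS
        have h1 : M ≤ S.map φ := by
          rw [← Subgroup.map_comap_eq_self_of_surjective hφ M]
          exact Subgroup.map_mono hS.le
        have h2 : S.map φ ≠ M := by
          intro he
          exact absurd (le_trans (Subgroup.le_comap_map φ S) (Subgroup.comap_mono he.le)) (not_le_of_gt hS)
        have h3 : S.map φ = ⊤ := hM.2 _ (lt_of_le_of_ne h1 (Ne.symm h2))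
        have h4 : Subgroup.comap φ (S.map φ) = S := by
          rw [Subgroup.comap_map_eq, sup_eq_left]
          exact le_trans (Subgroup.ker_le_comap _ _) hS.le
        rw [← h4, h3, Subgroup.comap_top]
    calc (frattini G).map φ ≤ (M.comap φ).map φ := Subgroup.map_mono (frattini_le_coatom hc)
      _ ≤ M := Subgroup.map_comap_le φ M
  rw [frattini, Order.radical]
  exact le_iInf₂ key

namespace SZConj

variable {K : Type*} [Group K] [Finite K] {A : Subgroup K} [A.Normal] [IsMulCommutative A]

/-- A complement subgroup, as a left transversal. -/
noncomputable def trans (C : Subgroup K) (h : A.IsComplement' C) :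
    A.LeftTransversal := ⟨(C : Set K), show Subgroup.IsComplement _ _ from h.symm⟩

noncomputable def cls (C : Subgroup K) (h : A.IsComplement' C) : A.QuotientDiff :=
  Quotient.mk'' (trans C h)

lemma smul_class (C : Subgroup K) (h : A.IsComplement' C) (c : K) (hc : c ∈ C) :
    c • (cls C h) = cls C h := by
  have hset : (MulOpposite.op c⁻¹) • (C : Set K) = (C : Set K) := by
    ext x
    constructor
    · rintro ⟨y, hy, rfl⟩
      exact C.mul_mem hy (C.inv_mem hc)
    · intro hx
      exact ⟨x * c, C.mul_mem hx hc, by simp [mul_assoc]⟩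
  show Quotient.mk'' _ = Quotient.mk'' _
  congr 1
  exact Subtype.ext hset

lemma stabilizer_eq (hco : (Nat.card A).Coprime A.index) (C : Subgroup K)
    (h : A.IsComplement' C) : stabilizer K (cls C h) = C := by
  have hle : C ≤ stabilizer K (cls C h) := fun c hc => smul_class C h c hc
  have hcomp : A.IsComplement' (stabilizer K (cls C h)) :=
    isComplement'_stabilizer_of_coprime hco
  have hcard : Nat.card (stabilizer K (cls C h)) = Nat.card C := by
    have e1 := h.card_mul
    have e2 := hcomp.card_mul
    have ha : 0 < Nat.card A := Nat.card_pos
    exact Nat.eq_of_mul_eq_mul_left ha (e2.trans e1.symm)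
  exact (SetLike.ext'_iff.mpr (Set.eq_of_subset_of_ncard_le (SetLike.coe_subset_coe.mpr hle)
    (by rw [← Nat.card_coe_set_eq, ← Nat.card_coe_set_eq]; exact hcard.le) (Set.toFinite _))).symm

/-- Abelian Schur-Zassenhaus: complements of a coprime abelian normal subgroup are
conjugate by an element of that subgroup. -/
theorem conj_complement (hco : (Nat.card A).Coprime A.index) (C₁ C₂ : Subgroup K)
    (h₁ : A.IsComplement' C₁) (h₂ : A.IsComplement' C₂) :
    ∃ a : A, C₂ = C₁.map (MulAut.conj (a : K)).toMonoidHom := by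
  obtain ⟨a, ha⟩ := Subgroup.exists_smul_eq hco (cls C₁ h₁) (cls C₂ h₂)
  refine ⟨a, ?_⟩
  have hs : (a : K) • cls C₁ h₁ = cls C₂ h₂ := ha
  calc C₂ = stabilizer K (cls C₂ h₂) := (stabilizer_eq hco C₂ h₂).symm
    _ = stabilizer K ((a : K) • cls C₁ h₁) := by rw [hs]
    _ = (stabilizer K (cls C₁ h₁)).map (MulAut.conj (a : K)).toMonoidHom :=
        stabilizer_smul_eq_stabilizer_map_conj _ _
    _ = C₁.map (MulAut.conj (a : K)).toMonoidHom := by rw [stabilizer_eq hco C₁ h₁]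

end SZConj

/-- An automorphism sends complements to complements. -/
theorem isComplement'_map {K : Type*} [Group K] (e : K ≃* K) {H C : Subgroup K}
    (h : H.IsComplement' C) :
    (H.map e.toMonoidHom).IsComplement' (C.map e.toMonoidHom) := by
  rw [Subgroup.isComplement'_def, Subgroup.isComplement_iff_existsUnique] at h ⊢
  intro g
  obtain ⟨⟨⟨a, ha⟩, ⟨c, hc⟩⟩, heq, huniq⟩ := h (e.symm g)
  simp only at heq
  refine ⟨⟨⟨e a, Subgroup.mem_map_of_mem _ ha⟩, ⟨e c, Subgroup.mem_map_of_mem _ hc⟩⟩, ?_, ?_⟩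
  · show e a * e c = g
    rw [← map_mul, heq, MulEquiv.apply_symm_apply]
  · rintro ⟨⟨a', ha'⟩, ⟨c', hc'⟩⟩ heq'
    obtain ⟨a₀, ha₀, rfl⟩ := ha'
    obtain ⟨c₀, hc₀, rfl⟩ := hc'
    have : e (a₀ * c₀) = g := by simpa using heq'
    have h0 : a₀ * c₀ = e.symm g := by rw [← this, MulEquiv.symm_apply_apply]
    have := huniq ⟨⟨a₀, ha₀⟩, ⟨c₀, hc₀⟩⟩ h0
    simp only [Prod.mk.injEq, Subtype.mk.injEq] at this ⊢
    exact ⟨Subtype.ext (congrArg e this.1), Subtype.ext (congrArg e this.2)⟩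

/-- Existence of a nontrivial abelian prime-power-order subgroup of a nontrivial
nilpotent normal subgroup, normal in the whole group. -/
theorem exists_abelian_normal (G : Type*) [Group G] [Finite G] (L : Subgroup G) [L.Normal]
    (hnil : Group.IsNilpotent L) (hbot : L ≠ ⊥) :
    ∃ (q : ℕ) (A : Subgroup G), q.Prime ∧ A.Normal ∧ A ≤ L ∧ A ≠ ⊥ ∧ IsMulCommutative A ∧
      (∀ r : ℕ, r.Prime → r ∣ Nat.card A → r = q) := by
  haveI : Nontrivial L := (Subgroup.nontrivial_iff_ne_bot L).mpr hbot
  have hcard : 1 < Nat.card L := Finite.one_lt_card_iff_nontrivial.mpr inferInstance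
  set q := (Nat.card L).minFac with hq
  have hqp : q.Prime := Nat.minFac_prime (by omega)
  haveI : Fact q.Prime := ⟨hqp⟩
  obtain ⟨Q⟩ : Nonempty (Sylow q L) := inferInstance
  have hQn : (Q : Subgroup L).Normal :=
    Sylow.normal_of_normalizerCondition (normalizerCondition_of_isNilpotent) Q
  haveI hQc : (Q : Subgroup L).Characteristic := Sylow.characteristic_of_normal Q hQn
  set QG : Subgroup G := (Q : Subgroup L).map L.subtype with hQG
  haveI hQGn : QG.Normal := ConjAct.normal_of_characteristic_of_normal
  have hQGL : QG ≤ L := Subgroup.map_subtype_le _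
  have hpQG : IsPGroup q QG := Q.2.map L.subtype
  have hQcard : Nat.card QG = q ^ (Nat.card L).factorization q := by
    rw [hQG]
    rw [Nat.card_congr
      (Subgroup.equivMapOfInjective _ _ (Subgroup.subtype_injective L)).toEquiv.symm]
    exact Q.card_eq_multiplicity
  have hfact : 0 < (Nat.card L).factorization q :=
    Nat.Prime.factorization_pos_of_dvd hqp (by omega) (Nat.minFac_dvd _)
  haveI hQGnt : Nontrivial QG := by
    rw [← Finite.one_lt_card_iff_nontrivial, hQcard]
    exact Nat.one_lt_pow (by omega) hqp.one_lt
  haveI := hpQG.center_nontrivial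
  obtain ⟨z, hz⟩ := exists_ne (1 : Subgroup.center QG)
  refine ⟨q, QG ⊓ Subgroup.centralizer (QG : Set G), hqp, ?_, le_trans inf_le_left hQGL,
    ?_, ?_, ?_⟩
  · constructor
    intro x hx g
    rw [Subgroup.mem_inf] at hx ⊢
    obtain ⟨hx1, hx2⟩ := hx
    constructor
    · exact hQGn.conj_mem x hx1 g
    · rw [Subgroup.mem_centralizer_iff] at hx2 ⊢
      intro h hh
      have hh' : g⁻¹ * h * g ∈ QG := by
        have := hQGn.conj_mem h hh g⁻¹
        simpa using this
      have e := hx2 _ hh'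
      calc h * (g * x * g⁻¹) = g * ((g⁻¹ * h * g) * x) * g⁻¹ := by group
        _ = g * (x * (g⁻¹ * h * g)) * g⁻¹ := by rw [e]
        _ = g * x * g⁻¹ * h := by group
  · intro hA
    apply hz
    have hmem : ((z : QG) : G) ∈ QG ⊓ Subgroup.centralizer (QG : Set G) := by
      rw [Subgroup.mem_inf]
      refine ⟨SetLike.coe_mem _, Subgroup.mem_centralizer_iff.mpr ?_⟩
      intro h hh
      have := z.2
      rw [Subgroup.mem_center_iff] at this
      exact congrArg (Subtype.val) (this ⟨h, hh⟩)
    rw [hA, Subgroup.mem_bot] at hmem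
    ext
    exact_mod_cast hmem
  · rw [← Subgroup.le_centralizer_iff_isMulCommutative]
    exact le_trans inf_le_right (Subgroup.centralizer_le (by exact_mod_cast inf_le_left))
  · intro r hr hrd
    have hA : IsPGroup q (QG ⊓ Subgroup.centralizer (QG : Set G) : Subgroup G) :=
      hpQG.to_le inf_le_left
    obtain ⟨n, hn⟩ := hA.exists_card_eq
    rw [hn] at hrd
    exact (Nat.prime_dvd_prime_iff_eq hr hqp).mp (hr.dvd_of_dvd_pow hrd)

/-- Transfer a normal Hall subgroup along a group isomorphism. -/
theorem hall_mulequiv {G₁ G₂ : Type*} [Group G₁] [Group G₂] (e : G₁ ≃* G₂) (π : Set ℕ)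
    (h : ∃ H : Subgroup G₁, H.Normal ∧ IsHallSubgroup π H) :
    ∃ H : Subgroup G₂, H.Normal ∧ IsHallSubgroup π H := by
  obtain ⟨H, hn, hh1, hh2⟩ := h
  refine ⟨H.map e.toMonoidHom, hn.map _ e.surjective, ?_, ?_⟩
  · intro r hr hrd
    apply hh1 r hr
    rwa [Nat.card_congr (Subgroup.equivMapOfInjective H _ e.injective).toEquiv.symm] at hrd
  · intro r hr hrd
    apply hh2 r hr
    rwa [Subgroup.index_map_eq H e.surjective
      (by rw [(MonoidHom.ker_eq_bot_iff _).mpr e.injective]; exact bot_le)] at hrd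

end Auxiliary

universe u

theorem hall_aux : ∀ (n : ℕ) (G : Type u) [Group G] [Finite G] (π : Set ℕ) (L : Subgroup G)
    [L.Normal], Nat.card G ≤ n → L ≤ frattini G →
    (∃ H : Subgroup (G ⧸ L), H.Normal ∧ IsHallSubgroup π H) →
    ∃ H : Subgroup G, H.Normal ∧ IsHallSubgroup π H := by
  intro n
  induction n with
  | zero =>
    intro G _ _ π L _ hle _ _
    have : 0 < Nat.card G := Nat.card_pos
    omega
  | succ n ih =>
    intro G _ _ π L _ hcard hL hex
    by_cases hbot : L = ⊥
    · subst hbot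
      exact hall_mulequiv (QuotientGroup.quotientBot (G := G)) π hex
    · -- L is nilpotent
      have hnil : Group.IsNilpotent L := by
        haveI := frattini_nilpotent (G := G)
        exact nilpotent_of_mulEquiv (Subgroup.subgroupOfEquivOfLe hL)
      obtain ⟨q, A, hqp, hAn, hAL, hAbot, hAcomm, hAq⟩ := exists_abelian_normal G L hnil hbot
      haveI := hAn
      haveI := hAcomm
      -- quotient by A and apply induction
      set φ := QuotientGroup.mk' A with hφ
      have hφs : Function.Surjective φ := QuotientGroup.mk'_surjective A
      set L₂ : Subgroup (G ⧸ A) := L.map φ with hL₂def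
      haveI : L₂.Normal := Subgroup.Normal.map inferInstance φ hφs
      have hL₂ : L₂ ≤ frattini (G ⧸ A) := le_trans (Subgroup.map_mono hL) (frattini_map_le' φ hφs)
      have hcard₂ : Nat.card (G ⧸ A) ≤ n := by
        have e1 : Nat.card (G ⧸ A) * Nat.card A = Nat.card G :=
          (card_eq_card_quotient_mul_card_subgroup A).symm
        have e2 : 1 < Nat.card A := (Subgroup.one_lt_card_iff_ne_bot (H := A)).mpr hAbot
        have e3 : 0 < Nat.card (G ⧸ A) := Nat.card_pos
        nlinarith
      have hex₂ : ∃ H : Subgroup ((G ⧸ A) ⧸ L₂), H.Normal ∧ IsHallSubgroup π H :=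
        hall_mulequiv (QuotientGroup.quotientQuotientEquivQuotient A L hAL).symm π hex
      obtain ⟨H₁, hH₁n, hH₁1, hH₁2⟩ := ih (G ⧸ A) π L₂ hcard₂ hL₂ hex₂
      -- pull back
      set K₁ : Subgroup G := H₁.comap φ with hK₁def
      haveI hK₁n : K₁.Normal := Subgroup.Normal.comap hH₁n φ
      have hAK₁ : A ≤ K₁ := by
        intro a ha
        have h1 : φ a = 1 := by
          simpa [hφ, QuotientGroup.eq_one_iff] using ha
        show φ a ∈ H₁
        rw [h1]
        exact H₁.one_mem
      have hK₁card : Nat.card K₁ = Nat.card H₁ * Nat.card A := card_comap_mk' A H₁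
      have hK₁index : K₁.index = H₁.index := index_comap_of_surjective _ hφs
      by_cases hqπ : q ∈ π
      · -- K₁ itself is a normal Hall π-subgroup
        refine ⟨K₁, hK₁n, ?_, ?_⟩
        · intro r hr hrd
          rw [hK₁card] at hrd
          rcases (Nat.Prime.dvd_mul hr).mp hrd with h | h
          · exact hH₁1 r hr h
          · rw [hAq r hr h]; exact hqπ
        · intro r hr hrd
          rw [hK₁index] at hrd
          exact hH₁2 r hr hrd
      · -- Schur-Zassenhaus splitting
        set A' : Subgroup K₁ := A.subgroupOf K₁ with hA'def
        haveI : A'.Normal := Subgroup.normal_subgroupOf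
        haveI : IsMulCommutative A' := Subgroup.subgroupOf_isMulCommutative (H := A) (K := K₁)
        have hA'card : Nat.card A' = Nat.card A :=
          Nat.card_congr (Subgroup.subgroupOfEquivOfLe hAK₁).toEquiv
        have hA'index : A'.index = Nat.card H₁ := by
          have e1 := card_mul_index A'
          rw [hA'card] at e1
          have e2 : 0 < Nat.card A := Nat.card_pos
          have : Nat.card A * A'.index = Nat.card A * Nat.card H₁ := by
            rw [e1, hK₁card]; ring
          exact Nat.eq_of_mul_eq_mul_left e2 this
        have hqH₁ : ¬ q ∣ Nat.card H₁ := fun hd => hqπ (hH₁1 q hqp hd)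
        have hco : (Nat.card A').Coprime A'.index := by
          rw [hA'card, hA'index]
          by_contra hnc
          obtain ⟨r, hr, hrd⟩ := Nat.exists_prime_and_dvd hnc
          have h1 : r ∣ Nat.card A := hrd.trans (Nat.gcd_dvd_left _ _)
          have h2 : r ∣ Nat.card H₁ := hrd.trans (Nat.gcd_dvd_right _ _)
          rw [hAq r hr h1] at h2
          exact hqH₁ h2
        obtain ⟨C, hC⟩ := Subgroup.exists_right_complement'_of_coprime (N := A') hco
        set P : Subgroup G := C.map K₁.subtype with hPdef
        have hPcard : Nat.card P = Nat.card H₁ := by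
          rw [hPdef, Nat.card_congr
            (Subgroup.equivMapOfInjective _ _ (Subgroup.subtype_injective K₁)).toEquiv.symm]
          have e1 := hC.card_mul
          rw [hA'card] at e1
          have e2 : 0 < Nat.card A := Nat.card_pos
          apply Nat.eq_of_mul_eq_mul_left e2
          rw [e1, hK₁card]; ring
        have hPindex : P.index = Nat.card A * H₁.index := by
          have e1 := card_mul_index P
          rw [hPcard] at e1
          have e2 := card_mul_index K₁
          rw [hK₁card, hK₁index] at e2
          have e3 : 0 < Nat.card H₁ := Nat.card_pos
          apply Nat.eq_of_mul_eq_mul_left e3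
          rw [e1, ← e2]; ring
        -- normality via Frattini argument
        have hnorm : P.Normal := by
          rw [← Subgroup.normalizer_eq_top_iff]
          apply frattini_nongenerating
          rw [eq_top_iff]
          intro g _
          -- conjugate complement
          have key : ∃ a : A, ((a : G))⁻¹ * g ∈ Subgroup.normalizer (P : Set G) := by
            set e : MulAut K₁ := MulAut.conjNormal g with hedef
            have hA'e : A'.map e.toMonoidHom = A' := by
              apply le_antisymm
              · rintro x ⟨y, hy, rfl⟩
                have hy' : ((y : K₁) : G) ∈ A := Subgroup.mem_subgroupOf.mp hy
                rw [Subgroup.mem_subgroupOf]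
                show ((e y : K₁) : G) ∈ A
                have he1 : ((e y : K₁) : G) = g * (y : G) * g⁻¹ :=
                  MulAut.conjNormal_apply g y
                rw [he1]
                exact hAn.conj_mem _ hy' g
              · intro x hx
                have hx' : ((x : K₁) : G) ∈ A := Subgroup.mem_subgroupOf.mp hx
                have hxx : e.symm x ∈ A' := by
                  rw [hA'def, Subgroup.mem_subgroupOf]
                  show ((e.symm x : K₁) : G) ∈ A
                  have he2 : ((e.symm x : K₁) : G) = g⁻¹ * (x : G) * g :=
                    MulAut.conjNormal_symm_apply g x
                  rw [he2]
                  have := hAn.conj_mem _ hx' g⁻¹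
                  simpa using this
                exact ⟨e.symm x, hxx, e.apply_symm_apply x⟩
            have hC₂ : A'.IsComplement' (C.map e.toMonoidHom) := by
              have := isComplement'_map e hC
              rwa [hA'e] at this
            obtain ⟨a, ha⟩ := SZConj.conj_complement hco C (C.map e.toMonoidHom) hC hC₂
            refine ⟨⟨(a : K₁), (Subgroup.mem_subgroupOf.mp a.2 : _)⟩, ?_⟩
            rw [Subgroup.mem_normalizer_iff]
            intro x
            set b : G := ((a : K₁) : G) with hbdef
            -- map P under conj g equals map P under conj b
            have hmaps : P.map (MulAut.conj g).toMonoidHom = P.map (MulAut.conj b).toMonoidHom := by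
              rw [hPdef, Subgroup.map_map, Subgroup.map_map]
              have comp1 : (MulAut.conj g).toMonoidHom.comp K₁.subtype
                  = K₁.subtype.comp e.toMonoidHom := by
                ext y
                show g * (y : G) * g⁻¹ = ((e y : K₁) : G)
                rw [hedef, MulAut.conjNormal_apply]
              have comp2 : (MulAut.conj b).toMonoidHom.comp K₁.subtype
                  = K₁.subtype.comp (MulAut.conj (a : K₁)).toMonoidHom := by
                ext y
                show b * (y : G) * b⁻¹ = (((MulAut.conj (a : K₁)) y : K₁) : G)
                rfl
              rw [comp1, comp2, ← Subgroup.map_map, ← Subgroup.map_map, ← ha]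
            -- conclude normalizer membership
            constructor
            · intro hx
              have h1 : g * x * g⁻¹ ∈ P.map (MulAut.conj g).toMonoidHom :=
                ⟨x, hx, rfl⟩
              rw [hmaps] at h1
              obtain ⟨y, hy, hy2⟩ := h1
              have : b⁻¹ * (g * x * g⁻¹) * b = y := by
                have : (MulAut.conj b) y = g * x * g⁻¹ := hy2
                rw [← this]
                simp [MulAut.conj_apply, mul_assoc]
              have hexp : b⁻¹ * g * x * (b⁻¹ * g)⁻¹ = y := by
                rw [← this]; group
              rw [← hexp] at hy
              exact hy
            · intro hx
              have h1 : (b⁻¹ * g) * x * (b⁻¹ * g)⁻¹ ∈ P := hx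
              have h2 : g * x * g⁻¹ ∈ P.map (MulAut.conj b).toMonoidHom := by
                refine ⟨(b⁻¹ * g) * x * (b⁻¹ * g)⁻¹, h1, ?_⟩
                show b * ((b⁻¹ * g) * x * (b⁻¹ * g)⁻¹) * b⁻¹ = g * x * g⁻¹
                group
              rw [← hmaps] at h2
              obtain ⟨y, hy, hy2⟩ := h2
              have : y = x := by
                have h3 : g * y * g⁻¹ = g * x * g⁻¹ := hy2
                have := mul_left_cancel (mul_right_cancel h3)
                exact this
              rwa [← this]
          obtain ⟨a, ha⟩ := key
          have hmem : g = (a : G) * (((a : G))⁻¹ * g) := by group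
          rw [hmem]
          have haf : (a : G) ∈ frattini G := hL (hAL a.2)
          rw [sup_comm]
          exact Subgroup.mul_mem_sup haf ha
        refine ⟨P, hnorm, ?_, ?_⟩
        · intro r hr hrd
          rw [hPcard] at hrd
          exact hH₁1 r hr hrd
        · intro r hr hrd
          rw [hPindex] at hrd
          rcases (Nat.Prime.dvd_mul hr).mp hrd with h | h
          · rw [hAq r hr h]; exact hqπ
          · exact hH₁2 r hr h

/-- If `L ⊴ G`, `L ≤ Φ(G)` and `G/L` has a normal Hall
`π`-subgroup, then so does `G`. -/
theorem normal_hall_of_quotient_frattini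
    (G : Type*) [Group G] [Finite G] (π : Set ℕ) (L : Subgroup G) [L.Normal]
    (hL : L ≤ frattini G)
    (h : ∃ H : Subgroup (G ⧸ L), H.Normal ∧ IsHallSubgroup π H) :
    ∃ H : Subgroup G, H.Normal ∧ IsHallSubgroup π H :=
  hall_aux (Nat.card G) G π L le_rfl hL h
end

section
/- Let p ≠ q be primes dividing the order of a finite group G, and let P be a Sylow p-subgroup of G. If every maximal subgroup of P has a q-closed supplement in G, then G is q-closed. -/
open Pointwise
/-- A finite group is `q`-closed if it has a normal Sylow `q`-subgroup. -/
def IsQClosed (q : ℕ) (H : Type*) [Group H] : Prop :=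
  ∃ Q : Sylow q H, (Q : Subgroup H).Normal

lemma my_relindex_eq_index_of_mul_eq_univ {G : Type*} [Group G] (H K : Subgroup G)
    (hHK : (H : Set G) * (K : Set G) = Set.univ) : K.relIndex H = K.index := by
  have h1 : ∀ a b : ↥H, @Setoid.r _ (QuotientGroup.leftRel (K.subgroupOf H)) a b →
      (QuotientGroup.mk (a : G) : G ⧸ K) = QuotientGroup.mk (b : G) := by
    intro a b hab
    rw [QuotientGroup.leftRel_apply] at hab
    rw [QuotientGroup.eq]
    exact hab
  let f : ↥H ⧸ K.subgroupOf H → G ⧸ K :=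
    fun x => Quotient.liftOn' x (fun h : ↥H => (QuotientGroup.mk (h : G) : G ⧸ K)) h1
  have hbij : Function.Bijective f := by
    constructor
    · intro a b
      induction a using QuotientGroup.induction_on
      induction b using QuotientGroup.induction_on
      rename_i a b
      intro hab
      have : (QuotientGroup.mk (a : G) : G ⧸ K) = QuotientGroup.mk (b : G) := hab
      rw [QuotientGroup.eq] at this
      rw [QuotientGroup.eq]
      exact this
    · intro y
      induction y using QuotientGroup.induction_on
      rename_i g
      have hg : g ∈ (H : Set G) * (K : Set G) := by rw [hHK]; exact Set.mem_univ g
      rw [Set.mem_mul] at hg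
      obtain ⟨a, ha, b, hb, rfl⟩ := hg
      refine ⟨QuotientGroup.mk (⟨a, ha⟩ : ↥H), ?_⟩
      show (QuotientGroup.mk a : G ⧸ K) = QuotientGroup.mk (a * b)
      rw [QuotientGroup.eq]
      simpa using hb
  rw [Subgroup.relIndex, Subgroup.index, Subgroup.index]
  exact Nat.card_eq_of_bijective f hbij

lemma my_card_eq_index_mul_card_inf {G : Type*} [Group G] (H K : Subgroup G)
    (hHK : (H : Set G) * (K : Set G) = Set.univ) :
    Nat.card H = K.index * Nat.card ↥(K ⊓ H) := by
  have h1 : Nat.card (K.subgroupOf H) * (K.subgroupOf H).index = Nat.card H :=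
    Subgroup.card_mul_index _
  have h2 : Nat.card (K.subgroupOf H) = Nat.card ↥(K ⊓ H) := by
    rw [← Subgroup.inf_subgroupOf_right K H]
    exact Nat.card_congr (Subgroup.subgroupOfEquivOfLe inf_le_right).toEquiv
  have h3 : (K.subgroupOf H).index = K.relIndex H := rfl
  rw [← h1, h2, h3, my_relindex_eq_index_of_mul_eq_univ H K hHK, mul_comm]

lemma my_exists_max_below {G : Type*} [Group G] [Finite G] {S P : Subgroup G} (hSP : S < P) :
    ∃ W, S ≤ W ∧ W < P ∧ ∀ B, W < B → B ≤ P → B = P := by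
  obtain ⟨W, hW, hmax⟩ := Set.Finite.exists_maximalFor id {W : Subgroup G | S ≤ W ∧ W < P}
    (Set.toFinite _) ⟨S, le_rfl, hSP⟩
  refine ⟨W, hW.1, hW.2, fun B hWB hBP => ?_⟩
  by_contra hne
  exact hWB.ne (le_antisymm hWB.le (hmax ⟨hW.1.trans hWB.le, lt_of_le_of_ne hBP hne⟩ hWB.le))

lemma my_key {G : Type*} [Group G] [Finite G] {p q : ℕ} [Fact p.Prime] [Fact q.Prime]
    (hpq : p ≠ q) (P : Sylow p G) (V T : Subgroup G) (hVP : V ≤ (P : Subgroup G))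
    (hT : IsQClosed q ↥T) (hprod : (V : Set G) * (T : Set G) = Set.univ) :
    ∃ Qs : Sylow q G, T ≤ Subgroup.normalizer ((Qs : Subgroup G) : Set G) ∧
      (V : Set G) * ((Subgroup.normalizer ((Qs : Subgroup G) : Set G) : Subgroup G) : Set G) = Set.univ := by
  obtain ⟨Qt, hQt⟩ := hT
  set Qm : Subgroup G := (Qt : Subgroup ↥T).map T.subtype with hQm
  have hinj : Function.Injective T.subtype := T.subtype_injective
  have hcard1 : Nat.card Qm = Nat.card (Qt : Subgroup ↥T) :=
    (Nat.card_congr (Subgroup.equivMapOfInjective _ _ hinj).toEquiv).symm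
  have hcard2 : Nat.card (Qt : Subgroup ↥T) = q ^ (Nat.card ↥T).factorization q :=
    Qt.card_eq_multiplicity
  have hVcard : Nat.card V = T.index * Nat.card ↥(T ⊓ V) :=
    my_card_eq_index_mul_card_inf V T hprod
  have hdvd : T.index ∣ Nat.card ↥(P : Subgroup G) :=
    (Dvd.intro _ hVcard.symm).trans (Subgroup.card_dvd_of_le hVP)
  have hn : Nat.card ↥(P : Subgroup G) = p ^ (Nat.card G).factorization p :=
    P.card_eq_multiplicity
  have hqT : ¬ q ∣ T.index := by
    intro hdq
    have h1 : q ∣ p ^ (Nat.card G).factorization p := hdq.trans (hn ▸ hdvd)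
    have h2 : q ∣ p := (Fact.out : q.Prime).dvd_of_dvd_pow h1
    exact hpq ((Nat.prime_dvd_prime_iff_eq (Fact.out : q.Prime) (Fact.out : p.Prime)).mp h2).symm
  have hfact : (Nat.card G).factorization q = (Nat.card ↥T).factorization q := by
    have hT := Subgroup.card_mul_index T
    rw [← hT, Nat.factorization_mul Nat.card_pos.ne' T.index_ne_zero_of_finite]
    simp [Nat.factorization_eq_zero_of_not_dvd hqT]
  have hcard : Nat.card Qm = q ^ (Nat.card G).factorization q := by
    rw [hcard1, hcard2, hfact]
  have hTle : T ≤ Subgroup.normalizer (Qm : Set G) := by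
    intro t ht
    rw [Subgroup.mem_normalizer_iff]
    intro y
    constructor
    · rintro ⟨z, hz, rfl⟩
      exact ⟨⟨t, ht⟩ * z * ⟨t, ht⟩⁻¹, hQt.conj_mem z hz ⟨t, ht⟩, rfl⟩
    · rintro ⟨z, hz, hzy⟩
      have hy : y = ((⟨t, ht⟩⁻¹ * z * (⟨t, ht⟩ : ↥T)⁻¹⁻¹ : ↥T) : G) := by
        have hzy' : (z : G) = t * y * t⁻¹ := hzy
        push_cast
        rw [hzy']
        group
      rw [hy]
      exact ⟨_, hQt.conj_mem z hz ⟨t, ht⟩⁻¹, rfl⟩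
  refine ⟨Sylow.ofCard Qm hcard, hTle, ?_⟩
  apply Set.eq_univ_of_univ_subset
  rw [← hprod]
  exact Set.mul_subset_mul_left hTle

/-- Let `p ≠ q` be primes dividing `|G|` and `P` a Sylow
`p`-subgroup of `G`.  If every maximal subgroup of `P` has a `q`-closed
supplement in `G`, then `G` is `q`-closed. -/
theorem qClosed_of_maximal_sylow_subgroups_have_qClosed_supplements
    (G : Type*) [Group G] [Finite G] (p q : ℕ) (hp : p.Prime) (hq : q.Prime)
    (hpq : p ≠ q) (hpd : p ∣ Nat.card G) (hqd : q ∣ Nat.card G)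
    (P : Sylow p G)
    (h : ∀ V : Subgroup G, V < (P : Subgroup G) →
      (∀ W : Subgroup G, V < W → W ≤ (P : Subgroup G) → W = (P : Subgroup G)) →
      ∃ T : Subgroup G, IsQClosed q T ∧ (V : Set G) * (T : Set G) = Set.univ) :
    IsQClosed q G := by
  haveI : Fact p.Prime := ⟨hp⟩
  haveI : Fact q.Prime := ⟨hq⟩
  have hPbot : (⊥ : Subgroup G) < (P : Subgroup G) :=
    bot_lt_iff_ne_bot.mpr (P.ne_bot_of_dvd_card hpd)
  obtain ⟨W₀, -, hW₀P, hW₀max⟩ := my_exists_max_below hPbot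
  obtain ⟨T₀, hT₀q, hprod₀⟩ := h W₀ hW₀P hW₀max
  obtain ⟨Q₀, hT₀N, hVN₀⟩ := my_key hpq P W₀ T₀ hW₀P.le hT₀q hprod₀
  set N : Subgroup G := Subgroup.normalizer ((Q₀ : Subgroup G) : Set G) with hNdef
  have hPN : (((P : Subgroup G) : Set G)) * (N : Set G) = Set.univ := by
    apply Set.eq_univ_of_univ_subset
    rw [← hVN₀]
    exact Set.mul_subset_mul_right (SetLike.coe_subset_coe.mpr hW₀P.le)
  by_cases hle : (P : Subgroup G) ≤ N
  · refine ⟨Q₀, ?_⟩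
    rw [← Subgroup.normalizer_eq_top_iff]
    have h1 : Nat.card ↥(P : Subgroup G) = N.index * Nat.card ↥(N ⊓ (P : Subgroup G)) :=
      my_card_eq_index_mul_card_inf _ N hPN
    rw [inf_eq_right.mpr hle] at h1
    have hpos : 0 < Nat.card ↥(P : Subgroup G) := Nat.card_pos
    have hidx : N.index = 1 := by
      have h2 : N.index * Nat.card ↥(P : Subgroup G) = 1 * Nat.card ↥(P : Subgroup G) := by
        rw [one_mul, ← h1]
      exact Nat.eq_of_mul_eq_mul_right hpos h2
    exact Subgroup.index_eq_one.mp hidx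
  · exfalso
    have hSP : N ⊓ (P : Subgroup G) < (P : Subgroup G) :=
      inf_le_right.lt_of_ne fun e => hle (by rw [← e]; exact inf_le_left)
    obtain ⟨W, hSW, hWP, hWmax⟩ := my_exists_max_below hSP
    -- `W` is normal in `P` (maximal subgroups of nilpotent groups are normal)
    have hcoatom : IsCoatom (W.subgroupOf (P : Subgroup G)) := by
      constructor
      · rw [Ne, Subgroup.subgroupOf_eq_top]
        exact fun hle' => hWP.ne (le_antisymm hWP.le hle')
      · intro B hB
        have h2 : (W.subgroupOf (P : Subgroup G)).map (P : Subgroup G).subtype <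
            Subgroup.map (P : Subgroup G).subtype B :=
          lt_of_le_of_ne (Subgroup.map_subtype_le_map_subtype.mpr hB.le)
            (fun e => hB.ne (Subgroup.map_injective (Subgroup.subtype_injective _) e))
        have h1 : W < Subgroup.map (P : Subgroup G).subtype B := by
          rwa [Subgroup.subgroupOf_map_subtype, inf_of_le_left hWP.le] at h2
        have h3 := hWmax _ h1 (Subgroup.map_subtype_le B)
        have h4 := congrArg (Subgroup.comap (P : Subgroup G).subtype) h3
        rwa [Subgroup.comap_map_eq_self_of_injective (Subgroup.subtype_injective _),
          show Subgroup.comap (P : Subgroup G).subtype (P : Subgroup G) = ⊤ from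
            Subgroup.subgroupOf_self _] at h4
    haveI hnilp : Group.IsNilpotent ↥(P : Subgroup G) := P.isPGroup'.isNilpotent
    have hnormal : (W.subgroupOf (P : Subgroup G)).Normal :=
      Subgroup.NormalizerCondition.normal_of_coatom _ normalizerCondition_of_isNilpotent hcoatom
    have hWconj : ∀ x ∈ (P : Subgroup G), ∀ w ∈ W, x * w * x⁻¹ ∈ W := by
      intro x hx w hw
      have hmem : (⟨w, hWP.le hw⟩ : ↥(P : Subgroup G)) ∈ W.subgroupOf (P : Subgroup G) :=
        Subgroup.mem_subgroupOf.mpr hw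
      have h5 := hnormal.conj_mem _ hmem ⟨x, hx⟩
      simpa using Subgroup.mem_subgroupOf.mp h5
    obtain ⟨T', hT'q, hprod'⟩ := h W hWP hWmax
    obtain ⟨Q₁, hT'N, hWN₁⟩ := my_key hpq P W T' hWP.le hT'q hprod'
    set N' : Subgroup G := Subgroup.normalizer ((Q₁ : Subgroup G) : Set G) with hN'def
    obtain ⟨g, hg⟩ := MulAction.exists_smul_eq G Q₀ Q₁
    have hgmem : g ∈ (((P : Subgroup G) : Set G)) * (N : Set G) := by
      rw [hPN]; exact Set.mem_univ g
    rw [Set.mem_mul] at hgmem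
    obtain ⟨x, hx, m, hm, rfl⟩ := hgmem
    have hxP : x ∈ (P : Subgroup G) := hx
    have hq1 : x • Q₀ = Q₁ := by
      rw [← hg, mul_smul, Sylow.smul_eq_iff_mem_normalizer.mpr hm]
    have hinf : N' ⊓ (P : Subgroup G) ≤ W := by
      intro y hy
      rw [Subgroup.mem_inf] at hy
      obtain ⟨hyN', hyP⟩ := hy
      have h1 : x⁻¹ * y * x ∈ N := by
        rw [hNdef]; refine Sylow.smul_eq_iff_mem_normalizer.mp ?_
        have hy2 : y • Q₁ = Q₁ := Sylow.smul_eq_iff_mem_normalizer.mpr hyN'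
        calc (x⁻¹ * y * x) • Q₀ = x⁻¹ • y • x • Q₀ := by rw [mul_smul, mul_smul]
          _ = x⁻¹ • Q₁ := by rw [hq1, hy2]
          _ = Q₀ := by rw [← hq1, inv_smul_smul]
      have h2 : x⁻¹ * y * x ∈ (P : Subgroup G) :=
        mul_mem (mul_mem (inv_mem hxP) hyP) hxP
      have h3 : x⁻¹ * y * x ∈ W := hSW (Subgroup.mem_inf.mpr ⟨h1, h2⟩)
      have h4 := hWconj x hxP _ h3
      have e : x * (x⁻¹ * y * x) * x⁻¹ = y := by group
      rwa [e] at h4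
    have hPN' : (((P : Subgroup G) : Set G)) * (N' : Set G) = Set.univ := by
      apply Set.eq_univ_of_univ_subset
      rw [← hWN₁]
      exact Set.mul_subset_mul_right (SetLike.coe_subset_coe.mpr hWP.le)
    have e1 : Nat.card W = N'.index * Nat.card ↥(N' ⊓ W) :=
      my_card_eq_index_mul_card_inf W N' hWN₁
    have e2 : Nat.card ↥(P : Subgroup G) = N'.index * Nat.card ↥(N' ⊓ (P : Subgroup G)) :=
      my_card_eq_index_mul_card_inf _ N' hPN'
    have e3 : N' ⊓ W = N' ⊓ (P : Subgroup G) :=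
      le_antisymm (inf_le_inf_left _ hWP.le) (le_inf inf_le_left hinf)
    have e4 : Nat.card W = Nat.card ↥(P : Subgroup G) := by rw [e1, e3, ← e2]
    apply hWP.ne
    have htop : W.subgroupOf (P : Subgroup G) = ⊤ := by
      rw [← Subgroup.card_eq_iff_eq_top,
        Nat.card_congr (Subgroup.subgroupOfEquivOfLe hWP.le).toEquiv]
      exact e4
    exact le_antisymm hWP.le (Subgroup.subgroupOf_eq_top.mp htop)
end

section
/- Let A and B be proper subgroups of a finite group G such that G = AB. Then for all x in G: A^x · B = G, and G ≠ A · A^x. -/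
open Pointwise

/-- If `A`, `B` are proper subgroups of a finite group `G`
with `G = AB`, then for every `x ∈ G` we have `A^x B = G` and `G ≠ A A^x`. -/
theorem conj_factorization
    (G : Type*) [Group G] [Finite G] (A B : Subgroup G)
    (hA : A ≠ ⊤) (hB : B ≠ ⊤)
    (hAB : (A : Set G) * (B : Set G) = Set.univ) (x : G) :
    ((MulAut.conj x⁻¹ • A : Subgroup G) : Set G) * (B : Set G) = Set.univ ∧
    (A : Set G) * ((MulAut.conj x⁻¹ • A : Subgroup G) : Set G) ≠ Set.univ := by
  have hmem : ∀ c : G, c ∈ (MulAut.conj x⁻¹ • A : Subgroup G) ↔ x * c * x⁻¹ ∈ A := by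
    intro c
    rw [Subgroup.mem_pointwise_smul_iff_inv_smul_mem]
    simp [MulAut.smul_def, mul_assoc]
  have hx : x ∈ (A : Set G) * (B : Set G) := by rw [hAB]; trivial
  obtain ⟨a, ha, b, hb, hab⟩ := hx
  constructor
  · ext g
    simp only [Set.mem_univ, iff_true]
    have hbg : b * g ∈ (A : Set G) * (B : Set G) := by rw [hAB]; trivial
    obtain ⟨a₁, ha₁, b₁, hb₁, h1⟩ := hbg
    refine ⟨b⁻¹ * a₁ * b, ?_, b⁻¹ * b₁, B.mul_mem (B.inv_mem hb) hb₁, ?_⟩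
    · rw [SetLike.mem_coe, hmem]
      have : x * (b⁻¹ * a₁ * b) * x⁻¹ = a * a₁ * a⁻¹ := by
        rw [← hab]; group
      rw [this]
      exact A.mul_mem (A.mul_mem ha ha₁) (A.inv_mem ha)
    · have : g = b⁻¹ * (b * g) := by group
      rw [this, ← h1]; group
  · intro h
    have hxmem : x ∈ (A : Set G) * ((MulAut.conj x⁻¹ • A : Subgroup G) : Set G) := by
      rw [h]; trivial
    obtain ⟨a₂, ha₂, c, hc, h2⟩ := hxmem
    rw [SetLike.mem_coe, hmem] at hc
    have hcx : c = a₂⁻¹ * x := by rw [← h2]; group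
    have hxA : x ∈ A := by
      have : x * c * x⁻¹ = x * a₂⁻¹ := by rw [hcx]; group
      rw [this] at hc
      have := A.mul_mem hc ha₂
      simpa using this
    have hsub : (A : Set G) * ((MulAut.conj x⁻¹ • A : Subgroup G) : Set G) ⊆ (A : Set G) := by
      rintro g ⟨a₃, ha₃, c₃, hc₃, rfl⟩
      rw [SetLike.mem_coe, hmem] at hc₃
      have hc₃' : c₃ ∈ A := by
        have : c₃ = x⁻¹ * (x * c₃ * x⁻¹) * x := by group
        rw [this]
        exact A.mul_mem (A.mul_mem (A.inv_mem hxA) hc₃) hxA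
      exact A.mul_mem ha₃ hc₃'
    rw [h] at hsub
    exact hA (Subgroup.coe_eq_univ.mp (Set.eq_univ_of_univ_subset hsub))
end

section
/- If a finite group G has three soluble subgroups A₁, A₂, A₃ whose indices |G:A₁|, |G:A₂|, |G:A₃| are pairwise coprime, then G is soluble. -/
open Subgroup Pointwise
open scoped commutatorElement

theorem wielandt_relIndex_eq {G : Type*} [Group G] [Finite G] (A B : Subgroup G)
    (h : Nat.Coprime A.index B.index) : B.relIndex A = B.index := by
  have h1 : (A ⊓ B).relIndex A * A.index = (A ⊓ B).index :=
    relIndex_mul_index inf_le_left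
  rw [inf_relIndex_left] at h1
  have h2 : B.index ∣ B.relIndex A * A.index := h1 ▸ index_dvd_of_le inf_le_right
  have h3 : B.index ∣ B.relIndex A := Nat.Coprime.dvd_of_dvd_mul_right h.symm h2
  have h4 : B.relIndex A ≤ B.index := by
    have := relIndex_le_of_le_right (le_top : A ≤ ⊤)
      (H := B) (by rw [relIndex_top_right]; exact index_ne_zero_of_finite)
    rwa [relIndex_top_right] at this
  have h5 : B.relIndex A ≠ 0 := index_ne_zero_of_finite (H := B.subgroupOf A)
  exact le_antisymm h4 (Nat.le_of_dvd (Nat.pos_of_ne_zero h5) h3)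

theorem wielandt_exists_mul {G : Type*} [Group G] [Finite G] {A B : Subgroup G}
    (h : Nat.Coprime A.index B.index) (g : G) :
    ∃ a ∈ A, ∃ b ∈ B, g = a * b := by
  have hrel : B.relIndex A = B.index := wielandt_relIndex_eq A B h
  let f : (A ⧸ B.subgroupOf A) → (G ⧸ B) :=
    Quotient.map' Subtype.val (by
      intro a b hab
      rw [QuotientGroup.leftRel_apply] at hab
      rw [QuotientGroup.leftRel_apply]
      exact hab)
  have hinj : Function.Injective f := by
    intro x y
    refine Quotient.inductionOn₂' x y ?_
    intro a b hab
    refine Quotient.sound' (QuotientGroup.leftRel_apply.mpr ?_)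
    have := QuotientGroup.leftRel_apply.mp (Quotient.eq''.mp hab)
    simpa [Subgroup.mem_subgroupOf] using this
  have hcard : Nat.card (G ⧸ B) ≤ Nat.card (A ⧸ B.subgroupOf A) := by
    change B.index ≤ B.relIndex A
    rw [hrel]
  have hsurj : Function.Surjective f := (hinj.bijective_of_nat_card_le hcard).2
  obtain ⟨x, hx⟩ := hsurj (QuotientGroup.mk g)
  revert hx
  refine Quotient.inductionOn' x ?_
  intro a ha
  have hb : (a : G)⁻¹ * g ∈ B :=
    QuotientGroup.leftRel_apply.mp (Quotient.eq''.mp ha)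
  exact ⟨a, a.2, (a : G)⁻¹ * g, hb, by group⟩

theorem wielandt_core {G : Type*} [Group G] [Finite G] {A₁ A₂ : Subgroup G}
    (h₁₂ : Nat.Coprime A₁.index A₂.index) {p : ℕ} [Fact p.Prime]
    (hpA₂ : ¬ p ∣ A₂.index) {N : Subgroup G} (hNbot : N ≠ ⊥)
    (hNp : IsPGroup p N)
    (hNnorm : ∀ h ∈ A₁, ∀ x ∈ N, h * x * h⁻¹ ∈ N) :
    ∃ K : Subgroup G, K.Normal ∧ K ≠ ⊥ ∧ K ≤ A₂ := by
  haveI : Finite (Sylow p G) :=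
    Finite.of_injective (fun P => (P : Set G)) SetLike.coe_injective
  obtain ⟨R⟩ : Nonempty (Sylow p ↥A₂) := Sylow.nonempty
  set T : Subgroup G := map A₂.subtype ↑R with hT
  have hTle : T ≤ A₂ := map_subtype_le _
  have hTp : IsPGroup p T := R.2.map _
  have hsub : T.subgroupOf A₂ = ↑R :=
    comap_map_eq_self_of_injective A₂.subtype_injective _
  have e2 : T.relIndex A₂ = (R : Subgroup ↥A₂).index := congrArg Subgroup.index hsub
  have hpTi : ¬ p ∣ T.index := by
    intro hdvd
    rw [← relIndex_mul_index hTle] at hdvd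
    rcases (Nat.Prime.dvd_mul Fact.out).mp hdvd with h | h
    · rw [e2] at h
      exact R.not_dvd_index h
    · exact hpA₂ h
  obtain ⟨U, hTU⟩ := hTp.exists_le_sylow
  have hTUeq : T = ↑U := by
    have d := relIndex_mul_index hTU
    have hdvdU : T.relIndex ↑U ∣ Nat.card ↥(U : Subgroup G) :=
      index_dvd_card (H := T.subgroupOf ↑U)
    obtain ⟨n, hn⟩ := U.2.exists_card_eq
    have hpd : ¬ p ∣ T.relIndex ↑U := fun hc =>
      hpTi (d ▸ Dvd.dvd.mul_right hc _)
    have hco : Nat.Coprime (T.relIndex ↑U) p :=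
      (Nat.Prime.coprime_iff_not_dvd Fact.out).mpr hpd |>.symm
    have h1 : T.relIndex ↑U = 1 :=
      (hco.pow_right n).eq_one_of_dvd (hn ▸ hdvdU)
    exact le_antisymm hTU (relIndex_eq_one.mp h1)
  obtain ⟨S, hNS⟩ := hNp.exists_le_sylow
  obtain ⟨g, hg⟩ := MulAction.exists_smul_eq G U S
  have hconj : ∀ x ∈ N, g⁻¹ * x * g ∈ A₂ := by
    intro x hx
    have hxS : x ∈ (S : Subgroup G) := hNS hx
    rw [← hg] at hxS
    rw [Sylow.smul_def] at hxS
    have : x ∈ (MulAut.conj g) • (U : Subgroup G) := hxS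
    rw [Subgroup.mem_pointwise_smul_iff_inv_smul_mem] at this
    have : g⁻¹ * x * g ∈ (U : Subgroup G) := by
      simpa [MulAut.smul_def] using this
    rw [← hTUeq] at this
    exact hTle this
  obtain ⟨a, ha, b, hb, hgab⟩ := wielandt_exists_mul h₁₂ g
  have hNA₂ : N ≤ A₂ := by
    intro x hx
    have hx' : a * x * a⁻¹ ∈ N := hNnorm a ha x hx
    have h2 := hconj _ hx'
    rw [hgab] at h2
    have key : (a * b)⁻¹ * (a * x * a⁻¹) * (a * b) = b⁻¹ * x * b := by group
    rw [key] at h2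
    have hx2 : b * (b⁻¹ * x * b) * b⁻¹ = x := by group
    rw [← hx2]
    exact mul_mem (mul_mem hb h2) (inv_mem hb)
  refine ⟨Subgroup.normalClosure (N : Set G), inferInstance, ?_, ?_⟩
  · intro hc
    exact hNbot (le_bot_iff.mp (hc ▸ Subgroup.le_normalClosure))
  · have hsubset : Group.conjugatesOfSet (N : Set G) ⊆ (A₂ : Set G) := by
      intro y hy
      rw [Group.mem_conjugatesOfSet_iff] at hy
      obtain ⟨x, hxN, hcj⟩ := hy
      obtain ⟨c, hc⟩ := isConj_iff.mp hcj
      obtain ⟨b', hb', a', ha', hcab⟩ := wielandt_exists_mul h₁₂.symm c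
      rw [← hc, hcab]
      have key : (b' * a') * x * (b' * a')⁻¹ = b' * (a' * x * a'⁻¹) * b'⁻¹ := by group
      rw [key]
      exact mul_mem (mul_mem hb' (hNA₂ (hNnorm a' ha' x hxN))) (inv_mem hb')
    exact (Subgroup.closure_le _).mpr hsubset

theorem wielandt_exists_pgroup {G : Type*} [Group G] [Finite G] {A : Subgroup G}
    (hA : A ≠ ⊥) (hsol : IsSolvable ↥A) :
    ∃ p : ℕ, p.Prime ∧ ∃ N : Subgroup G, N ≠ ⊥ ∧ IsPGroup p N ∧
      ∀ h ∈ A, ∀ x ∈ N, h * x * h⁻¹ ∈ N := by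
  haveI : Nontrivial ↥A := (nontrivial_iff_ne_bot A).mpr hA
  classical
  obtain ⟨m, hm⟩ := isSolvable_def ↥A |>.mp hsol
  have hP : ∃ k, derivedSeries ↥A k = ⊥ := ⟨m, hm⟩
  set n₀ := Nat.find hP with hn₀def
  have hn₀ : derivedSeries ↥A n₀ = ⊥ := Nat.find_spec hP
  have hn₀pos : n₀ ≠ 0 := by
    intro h
    rw [h, derivedSeries_zero] at hn₀
    exact top_ne_bot hn₀
  set M' := derivedSeries ↥A (n₀ - 1) with hM'def
  have hM'bot : M' ≠ ⊥ := Nat.find_min hP (by omega)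
  have hM'comm : ∀ x y : ↥A, x ∈ M' → y ∈ M' → x * y = y * x := by
    intro x y hx hy
    have h1 : ⁅x, y⁆ ∈ ⁅M', M'⁆ := commutator_mem_commutator hx hy
    have h2 : ⁅M', M'⁆ = derivedSeries ↥A n₀ := by
      rw [← derivedSeries_succ]
      congr 1
      omega
    rw [h2, hn₀] at h1
    exact commutatorElement_eq_one_iff_mul_comm.mp (mem_bot.mp h1)
  haveI hM'norm : M'.Normal := derivedSeries_normal ↥A (n₀ - 1)
  set M : Subgroup G := M'.map A.subtype with hMdef
  have hMbot : M ≠ ⊥ := by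
    intro h
    rw [Subgroup.map_eq_bot_iff, ker_subtype, le_bot_iff] at h
    exact hM'bot h
  have hMcomm : ∀ x ∈ M, ∀ y ∈ M, x * y = y * x := by
    rintro _ ⟨x, hx, rfl⟩ _ ⟨y, hy, rfl⟩
    have := hM'comm x y hx hy
    exact_mod_cast congrArg (A.subtype) this
  have hMnorm : ∀ h ∈ A, ∀ x ∈ M, h * x * h⁻¹ ∈ M := by
    rintro h hh _ ⟨x, hx, rfl⟩
    refine ⟨(⟨h, hh⟩ : ↥A) * x * (⟨h, hh⟩ : ↥A)⁻¹, hM'norm.conj_mem x hx ⟨h, hh⟩, rfl⟩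
  haveI : Nontrivial ↥M := (nontrivial_iff_ne_bot M).mpr hMbot
  set p := (Nat.card ↥M).minFac with hpdef
  have hp : p.Prime := Nat.minFac_prime (by
    intro h
    exact hMbot (card_eq_one.mp h))
  haveI : Fact p.Prime := ⟨hp⟩
  set e := Nat.card ↥M with hedef
  have hepos : e ≠ 0 := Nat.card_pos.ne'
  refine ⟨p, hp, ?_⟩
  set N : Subgroup G :=
    { carrier := {x : G | x ∈ M ∧ x ^ p ^ e = 1}
      one_mem' := ⟨one_mem M, one_pow _⟩
      mul_mem' := by
        rintro x y ⟨hxM, hx⟩ ⟨hyM, hy⟩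
        refine ⟨mul_mem hxM hyM, ?_⟩
        have hc : Commute x y := hMcomm x hxM y hyM
        rw [hc.mul_pow, hx, hy, one_mul]
      inv_mem' := by
        rintro x ⟨hxM, hx⟩
        exact ⟨inv_mem hxM, by rw [inv_pow, hx, inv_one]⟩ } with hNdef
  have hmemN : ∀ x : G, x ∈ N ↔ x ∈ M ∧ x ^ p ^ e = 1 := fun x => Iff.rfl
  obtain ⟨y, hy⟩ := exists_prime_orderOf_dvd_card' (G := ↥M) p (Nat.minFac_dvd _)
  have horder : orderOf (y : G) = p := by
    rw [← hy]
    exact orderOf_injective M.subtype M.subtype_injective y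
  have hyN : (y : G) ∈ N := by
    refine ⟨y.2, ?_⟩
    rw [← orderOf_dvd_iff_pow_eq_one, horder]
    exact dvd_pow_self p hepos
  have hyne : (y : G) ≠ 1 := by
    intro h
    rw [h, orderOf_one] at horder
    exact hp.ne_one horder.symm
  refine ⟨N, ?_, ?_, ?_⟩
  · intro h
    exact hyne (mem_bot.mp (h ▸ hyN))
  · intro g
    refine ⟨e, ?_⟩
    ext
    push_cast
    exact g.2.2
  · rintro h hh x ⟨hxM, hxp⟩
    refine ⟨hMnorm h hh x hxM, ?_⟩
    rw [conj_pow, hxp, mul_one, mul_inv_cancel]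

universe u

theorem wielandt_main (n : ℕ) : ∀ (G : Type u) [Group G] [Finite G], Nat.card G = n →
    ∀ A₁ A₂ A₃ : Subgroup G, IsSolvable ↥A₁ → IsSolvable ↥A₂ → IsSolvable ↥A₃ →
    Nat.Coprime A₁.index A₂.index → Nat.Coprime A₁.index A₃.index →
    Nat.Coprime A₂.index A₃.index → IsSolvable G := by
  induction n using Nat.strong_induction_on with
  | _ n IH =>
  intro G _ _ hcard A₁ A₂ A₃ h₁ h₂ h₃ h₁₂ h₁₃ h₂₃
  have htop : ∀ B : Subgroup G, IsSolvable ↥B → B = ⊤ → IsSolvable G := by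
    intro B hB hBt
    subst hBt
    haveI : Group.IsSolvable ↥(⊤ : Subgroup G) := hB
    exact solvable_of_surjective (f := (⊤ : Subgroup G).subtype)
      (fun g => ⟨⟨g, mem_top g⟩, rfl⟩)
  by_cases hbot : A₁ = ⊥
  · have hA2 : A₂.index = 1 := by
      rw [hbot, index_bot] at h₁₂
      exact Nat.Coprime.eq_one_of_dvd h₁₂.symm A₂.index_dvd_card
    exact htop A₂ h₂ (index_eq_one.mp hA2)
  by_cases hA₁t : A₁ = ⊤
  · exact htop A₁ h₁ hA₁t
  obtain ⟨p, hp, N, hNbot, hNp, hNnorm⟩ := wielandt_exists_pgroup hbot h₁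
  haveI : Fact p.Prime := ⟨hp⟩
  have hnd : ¬ p ∣ A₂.index ∨ ¬ p ∣ A₃.index := by
    by_contra hcon
    push_neg at hcon
    have h4 : p ∣ 1 := h₂₃.gcd_eq_one ▸ Nat.dvd_gcd hcon.1 hcon.2
    exact hp.ne_one (Nat.dvd_one.mp h4)
  have hK : ∃ K : Subgroup G, K.Normal ∧ K ≠ ⊥ ∧ IsSolvable ↥K := by
    rcases hnd with h | h
    · obtain ⟨K, hKn, hKb, hKle⟩ := wielandt_core h₁₂ h hNbot hNp hNnorm
      refine ⟨K, hKn, hKb, ?_⟩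
      haveI : Group.IsSolvable ↥A₂ := h₂
      exact solvable_of_solvable_injective (Subgroup.inclusion_injective hKle)
    · obtain ⟨K, hKn, hKb, hKle⟩ := wielandt_core h₁₃ h hNbot hNp hNnorm
      refine ⟨K, hKn, hKb, ?_⟩
      haveI : Group.IsSolvable ↥A₃ := h₃
      exact solvable_of_solvable_injective (Subgroup.inclusion_injective hKle)
  obtain ⟨K, hKn, hKb, hKsol⟩ := hK
  haveI := hKn
  haveI : Group.IsSolvable ↥K := hKsol
  haveI : Nontrivial ↥K := (nontrivial_iff_ne_bot K).mpr hKb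
  set f := QuotientGroup.mk' K with hfdef
  have hfsurj : Function.Surjective f := QuotientGroup.mk'_surjective K
  haveI : Group.IsSolvable (G ⧸ K) := by
    have hlt : Nat.card (G ⧸ K) < n := by
      rw [← hcard, card_eq_card_quotient_mul_card_subgroup K]
      have h2 : 1 < Nat.card ↥K := Finite.one_lt_card
      have hqpos : 0 < Nat.card (G ⧸ K) := Nat.card_pos
      exact (Nat.lt_mul_iff_one_lt_right hqpos).mpr h2
    refine IH (Nat.card (G ⧸ K)) hlt (G ⧸ K) rfl (A₁.map f) (A₂.map f) (A₃.map f)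
      ?_ ?_ ?_ ?_ ?_ ?_
    · haveI : Group.IsSolvable ↥A₁ := h₁; exact solvable_of_surjective (f.subgroupMap_surjective A₁)
    · haveI : Group.IsSolvable ↥A₂ := h₂; exact solvable_of_surjective (f.subgroupMap_surjective A₂)
    · haveI : Group.IsSolvable ↥A₃ := h₃; exact solvable_of_surjective (f.subgroupMap_surjective A₃)
    · exact Nat.Coprime.coprime_dvd_right (A₂.index_map_dvd hfsurj)
        (Nat.Coprime.coprime_dvd_left (A₁.index_map_dvd hfsurj) h₁₂)
    · exact Nat.Coprime.coprime_dvd_right (A₃.index_map_dvd hfsurj)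
        (Nat.Coprime.coprime_dvd_left (A₁.index_map_dvd hfsurj) h₁₃)
    · exact Nat.Coprime.coprime_dvd_right (A₃.index_map_dvd hfsurj)
        (Nat.Coprime.coprime_dvd_left (A₂.index_map_dvd hfsurj) h₂₃)
  refine solvable_of_ker_le_range K.subtype f ?_
  rw [QuotientGroup.ker_mk']
  rw [Subgroup.range_subtype]

/-- Wielandt: If a finite group `G` has three soluble subgroups
whose indices are pairwise coprime, then `G` is soluble. -/
theorem solvable_of_three_solvable_coprime_indices
    (G : Type*) [Group G] [Finite G] (A₁ A₂ A₃ : Subgroup G)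
    (h₁ : IsSolvable A₁) (h₂ : IsSolvable A₂) (h₃ : IsSolvable A₃)
    (h₁₂ : Nat.Coprime A₁.index A₂.index)
    (h₁₃ : Nat.Coprime A₁.index A₃.index)
    (h₂₃ : Nat.Coprime A₂.index A₃.index) :
    IsSolvable G := by
  exact wielandt_main (Nat.card G) G rfl A₁ A₂ A₃ h₁ h₂ h₃ h₁₂ h₁₃ h₂₃
end

section
/- If a finite group G has three nilpotent subgroups A₁, A₂, A₃ whose indices |G:A₁|, |G:A₂|, |G:A₃| are pairwise coprime, then G is nilpotent. -/
open Subgroup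

/-- If `A` is a nilpotent subgroup of a finite group `G` whose index is not divisible by the
prime `p`, then the number of Sylow `p`-subgroups of `G` divides the index of `A`. -/
lemma card_sylow_dvd_index_of_nilpotent {G : Type*} [Group G] [Finite G]
    (p : ℕ) [hp : Fact p.Prime] (A : Subgroup G) (hA : Group.IsNilpotent A)
    (hpA : ¬ p ∣ A.index) : Nat.card (Sylow p G) ∣ A.index := by
  -- take a Sylow p-subgroup of A
  obtain ⟨Q⟩ : Nonempty (Sylow p A) := inferInstance
  -- it is normal in A since A is nilpotent
  have hQnormal : (Q : Subgroup A).Normal := by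
    have htfae := (isNilpotent_of_finite_tfae (G := A)).out 0 3
    exact htfae.mp hA p hp Q
  -- its image in G is a Sylow p-subgroup of G
  have hcard : Nat.card ((Q : Subgroup A).map A.subtype) = p ^ (Nat.card G).factorization p := by
    have h1 : Nat.card ((Q : Subgroup A).map A.subtype) = Nat.card (Q : Subgroup A) :=
      Nat.card_congr (Subgroup.equivMapOfInjective _ _ A.subtype_injective).symm.toEquiv
    have h2 : Nat.card (Q : Subgroup A) = p ^ (Nat.card A).factorization p :=
      Sylow.card_eq_multiplicity Q
    have h3 : (Nat.card A).factorization p = (Nat.card G).factorization p := by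
      have hcardG : Nat.card G = Nat.card A * A.index := (Subgroup.card_mul_index A).symm
      have hA0 : Nat.card A ≠ 0 := Nat.card_pos.ne'
      have hI0 : A.index ≠ 0 := by
        intro h; exact hpA (h ▸ dvd_zero p)
      rw [hcardG, Nat.factorization_mul hA0 hI0]
      simp [Nat.factorization_eq_zero_of_not_dvd hpA]
    rw [h1, h2, h3]
  let P : Sylow p G := Sylow.ofCard _ hcard
  have hPcoe : (P : Subgroup G) = (Q : Subgroup A).map A.subtype := Sylow.coe_ofCard _ hcard
  -- A normalizes P
  have hle : A ≤ Subgroup.normalizer ((P : Subgroup G) : Set G) := by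
    intro a ha
    rw [Subgroup.mem_normalizer_iff]
    intro x
    rw [hPcoe]
    constructor
    · rintro ⟨y, hy, rfl⟩
      exact ⟨(⟨a, ha⟩ : A) * y * (⟨a, ha⟩ : A)⁻¹,
        hQnormal.conj_mem y hy ⟨a, ha⟩, rfl⟩
    · rintro h
      obtain ⟨y, hy, hyx⟩ := h
      refine ⟨(⟨a, ha⟩ : A)⁻¹ * y * (⟨a, ha⟩ : A), hQnormal.conj_mem' y hy _, ?_⟩
      have hyG : (y : G) = a * x * a⁻¹ := hyx
      show ((⟨a, ha⟩⁻¹ * y * ⟨a, ha⟩ : A) : G) = x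
      push_cast
      rw [hyG]
      group
  calc Nat.card (Sylow p G) = (Subgroup.normalizer ((P : Subgroup G) : Set G)).index :=
        Sylow.card_eq_index_normalizer P
    _ ∣ A.index := Subgroup.index_dvd_of_le hle

/-- If the number of Sylow `p`-subgroups divides each of two coprime numbers, every Sylow
`p`-subgroup is normal. -/
lemma sylow_normal_of_dvd_coprime {G : Type*} [Group G] [Finite G]
    (p : ℕ) [Fact p.Prime] {m n : ℕ} (hm : Nat.card (Sylow p G) ∣ m)
    (hn : Nat.card (Sylow p G) ∣ n) (h : Nat.Coprime m n) (P : Sylow p G) :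
    (P : Subgroup G).Normal := by
  have h1 : Nat.card (Sylow p G) = 1 := Nat.eq_one_of_dvd_coprimes h hm hn
  have : Subsingleton (Sylow p G) := (Nat.card_eq_one_iff_unique.mp h1).1
  rw [← Subgroup.normalizer_eq_top_iff]
  rw [eq_top_iff]
  intro g _
  exact Sylow.smul_eq_iff_mem_normalizer.mp (Subsingleton.elim _ _)

/-- Kegel: If a finite group `G` has three nilpotent subgroups
whose indices are pairwise coprime, then `G` is nilpotent. -/
theorem nilpotent_of_three_nilpotent_coprime_indices
    (G : Type*) [Group G] [Finite G] (A₁ A₂ A₃ : Subgroup G)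
    (h₁ : Group.IsNilpotent A₁) (h₂ : Group.IsNilpotent A₂)
    (h₃ : Group.IsNilpotent A₃)
    (h₁₂ : Nat.Coprime A₁.index A₂.index)
    (h₁₃ : Nat.Coprime A₁.index A₃.index)
    (h₂₃ : Nat.Coprime A₂.index A₃.index) :
    Group.IsNilpotent G := by
  have htfae := (isNilpotent_of_finite_tfae (G := G)).out 3 0
  apply htfae.mp
  intro p hp P
  by_cases hd1 : p ∣ A₁.index
  · have hd2 : ¬ p ∣ A₂.index := fun h =>
      hp.out.one_lt.ne' (Nat.eq_one_of_dvd_coprimes h₁₂ hd1 h ▸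
        (Nat.eq_one_of_dvd_coprimes h₁₂ hd1 h))
    have hd3 : ¬ p ∣ A₃.index := fun h =>
      hp.out.one_lt.ne' (Nat.eq_one_of_dvd_coprimes h₁₃ hd1 h)
    exact sylow_normal_of_dvd_coprime p
      (card_sylow_dvd_index_of_nilpotent p A₂ h₂ hd2)
      (card_sylow_dvd_index_of_nilpotent p A₃ h₃ hd3) h₂₃ P
  · by_cases hd2 : p ∣ A₂.index
    · have hd3 : ¬ p ∣ A₃.index := fun h =>
        hp.out.one_lt.ne' (Nat.eq_one_of_dvd_coprimes h₂₃ hd2 h)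
      exact sylow_normal_of_dvd_coprime p
        (card_sylow_dvd_index_of_nilpotent p A₁ h₁ hd1)
        (card_sylow_dvd_index_of_nilpotent p A₃ h₃ hd3) h₁₃ P
    · exact sylow_normal_of_dvd_coprime p
        (card_sylow_dvd_index_of_nilpotent p A₁ h₁ hd1)
        (card_sylow_dvd_index_of_nilpotent p A₂ h₂ hd2) h₁₂ P
end

section
/- If a finite group G has three abelian subgroups A₁, A₂, A₃ whose indices |G:A₁|, |G:A₂|, |G:A₃| are pairwise coprime, then G is abelian. -/
open Subgroup

private lemma index_inf_eq_of_coprime {G : Type*} [Group G] [Finite G] (A B : Subgroup G)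
    (h : Nat.Coprime A.index B.index) : (A ⊓ B).index = A.index * B.index := by
  have hdvd : A.index * B.index ∣ (A ⊓ B).index :=
    h.mul_dvd_of_dvd_of_dvd (index_dvd_of_le inf_le_left) (index_dvd_of_le inf_le_right)
  have hpos : 0 < A.index * B.index :=
    Nat.pos_of_ne_zero (Nat.mul_ne_zero index_ne_zero_of_finite index_ne_zero_of_finite)
  have hne : (A ⊓ B).index ≠ 0 := index_ne_zero_of_finite
  exact le_antisymm (index_inf_le) (Nat.le_of_dvd (Nat.pos_of_ne_zero hne) hdvd)

private lemma exists_factorization {G : Type*} [Group G] [Finite G] (A B : Subgroup G)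
    (h : Nat.Coprime A.index B.index) (g : G) : ∃ b ∈ B, ∃ a ∈ A, g = b * a := by
  have hrel : A.relIndex B = A.index := by
    have h1 : A.relIndex B * B.index = (A ⊓ B).index := by
      rw [← inf_relIndex_right A B]
      exact relIndex_mul_index inf_le_right
    have h2 := index_inf_eq_of_coprime A B h
    have hB : B.index ≠ 0 := index_ne_zero_of_finite
    exact Nat.eq_of_mul_eq_mul_right (Nat.pos_of_ne_zero hB) (by rw [h1, h2])
  -- embedding B ⧸ A.subgroupOf B ↪ G ⧸ A
  let f : B ⧸ (A.subgroupOf B) → G ⧸ A :=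
    Quotient.map' (Subtype.val) (fun a b hab => by
      rw [QuotientGroup.leftRel_apply] at hab ⊢
      exact hab)
  have hinj : Function.Injective f := by
    intro x y
    induction x using Quotient.inductionOn' with
    | h x =>
    induction y using Quotient.inductionOn' with
    | h y =>
    intro hxy
    have : ((x : G)⁻¹ * y : G) ∈ A := (QuotientGroup.eq).mp hxy
    exact Quotient.sound' (QuotientGroup.leftRel_apply.mpr this)
  have hcard : Nat.card (B ⧸ (A.subgroupOf B)) = Nat.card (G ⧸ A) := by
    have : Nat.card (B ⧸ (A.subgroupOf B)) = A.relIndex B := rfl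
    rw [this, hrel, index_eq_card]
  have hbij : Function.Bijective f :=
    (Nat.bijective_iff_injective_and_card f).mpr ⟨hinj, hcard⟩
  obtain ⟨q, hq⟩ := hbij.2 (QuotientGroup.mk g : G ⧸ A)
  induction q using Quotient.inductionOn' with
  | h b =>
  have : ((b : G) : G ⧸ A) = (g : G ⧸ A) := hq
  have hmem : ((b : G)⁻¹ * g) ∈ A := (QuotientGroup.eq).mp this
  exact ⟨(b : G), b.2, (b : G)⁻¹ * g, hmem, by group⟩

private lemma inf_le_center {G : Type*} [Group G] [Finite G] (A B : Subgroup G)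
    (hA : IsMulCommutative A) (hB : IsMulCommutative B)
    (h : Nat.Coprime A.index B.index) : A ⊓ B ≤ Subgroup.center G := by
  intro z hz
  rw [Subgroup.mem_center_iff]
  intro g
  obtain ⟨b, hb, a, ha, rfl⟩ := exists_factorization A B h g
  have h1 : a * z = z * a := mul_comm_of_mem_isMulCommutative (H := A) ha hz.1
  have h2 : z * b = b * z := mul_comm_of_mem_isMulCommutative (H := B) hz.2 hb
  calc b * a * z = b * (z * a) := by rw [mul_assoc, h1]
    _ = z * (b * a) := by rw [← mul_assoc, ← h2, mul_assoc]

/-- Doerk: If a finite group `G` has three abelian subgroups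
whose indices are pairwise coprime, then `G` is abelian. -/
theorem abelian_of_three_abelian_coprime_indices
    (G : Type*) [Group G] [Finite G] (A₁ A₂ A₃ : Subgroup G)
    (h₁ : IsMulCommutative A₁) (h₂ : IsMulCommutative A₂) (h₃ : IsMulCommutative A₃)
    (h₁₂ : Nat.Coprime A₁.index A₂.index)
    (h₁₃ : Nat.Coprime A₁.index A₃.index)
    (h₂₃ : Nat.Coprime A₂.index A₃.index) :
    ∀ x y : G, x * y = y * x := by
  have key : ∀ (A B : Subgroup G), IsMulCommutative A → IsMulCommutative B →
      Nat.Coprime A.index B.index →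
      (Subgroup.center G).index ∣ A.index * B.index := by
    intro A B hA hB h
    calc (Subgroup.center G).index ∣ (A ⊓ B).index :=
          index_dvd_of_le (inf_le_center A B hA hB h)
      _ = A.index * B.index := index_inf_eq_of_coprime A B h
  have d12 := key A₁ A₂ h₁ h₂ h₁₂
  have d13 := key A₁ A₃ h₁ h₃ h₁₃
  have d23 := key A₂ A₃ h₂ h₃ h₂₃
  have hone : (Subgroup.center G).index = 1 := by
    by_contra hne
    obtain ⟨p, hp, hpd⟩ := Nat.exists_prime_and_dvd hne
    have hp12 : p ∣ A₁.index * A₂.index := hpd.trans d12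
    have hp13 : p ∣ A₁.index * A₃.index := hpd.trans d13
    have hp23 : p ∣ A₂.index * A₃.index := hpd.trans d23
    rcases (Nat.Prime.dvd_mul hp).mp hp12 with h1 | h2
    · rcases (Nat.Prime.dvd_mul hp).mp hp23 with h2 | h3
      · exact Nat.Prime.one_lt hp |>.ne' (Nat.eq_one_of_dvd_coprimes h₁₂ h1 h2)
      · exact Nat.Prime.one_lt hp |>.ne' (Nat.eq_one_of_dvd_coprimes h₁₃ h1 h3)
    · rcases (Nat.Prime.dvd_mul hp).mp hp13 with h1 | h3
      · exact Nat.Prime.one_lt hp |>.ne' (Nat.eq_one_of_dvd_coprimes h₁₂ h1 h2)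
      · exact Nat.Prime.one_lt hp |>.ne' (Nat.eq_one_of_dvd_coprimes h₂₃ h2 h3)
  have : Subgroup.center G = ⊤ := Subgroup.index_eq_one.mp hone
  intro x y
  have hy : y ∈ Subgroup.center G := this ▸ Subgroup.mem_top y
  exact Subgroup.mem_center_iff.mp hy x
end

section
/- Suppose a finite group G has three subgroups A₁, A₂, A₃ whose indices are pairwise coprime, such that for all i ≠ j, A_i ∩ A_j is contained in Z_n(F_i) ∩ Z_n(F_j), where F_i is the intersection of all maximal nilpotent subgroups of A_i (a nilpotent characteristic subgroup) and Z_n denotes the n-th term of the upper central series. Then G is nilpotent of nilpotency class at most n. -/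
/-- `U` is a maximal nilpotent subgroup of its ambient group. -/
def IsMaxNilpotentSubgroup {H : Type*} [Group H] (U : Subgroup H) : Prop :=
  Group.IsNilpotent U ∧ ∀ V : Subgroup H, Group.IsNilpotent V → U ≤ V → U = V

/-- The intersection of all maximal nilpotent subgroups of a group. -/
def intNilp (H : Type*) [Group H] : Subgroup H :=
  sInf {U : Subgroup H | IsMaxNilpotentSubgroup U}

/-- `Z_n(Int_N(A))` viewed as a subgroup of the ambient group `G`:
the `n`-th term of the upper central series of the intersection of all
maximal nilpotent subgroups of `A`. -/
def znIntNilp {G : Type*} [Group G] (A : Subgroup G) (n : ℕ) : Subgroup G :=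
  Subgroup.map A.subtype
    (Subgroup.map (intNilp A).subtype (upperCentralSeries (intNilp A) n))

open Subgroup hiding upperCentralSeries upperCentralSeries_zero mem_upperCentralSeries_succ_iff
  comap_upperCentralSeries upperCentralSeries_eq_top_iff_nilpotencyClass_le

lemma IsMaxNilpotentSubgroup.map_aut {H : Type*} [Group H] {U : Subgroup H} (e : H ≃* H)
    (hU : IsMaxNilpotentSubgroup U) : IsMaxNilpotentSubgroup (U.map (e : H →* H)) := by
  obtain ⟨h1, h2⟩ := hU
  constructor
  · exact @nilpotent_of_mulEquiv _ _ _ _ h1 (e.subgroupMap U)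
  · intro V hV hle
    have hVU : U ≤ V.map (e.symm : H →* H) := by
      have := Subgroup.map_mono (f := (e.symm : H →* H)) hle
      rwa [Subgroup.map_map, ← MulEquiv.coe_monoidHom_trans, MulEquiv.self_trans_symm,
        MulEquiv.coe_monoidHom_refl, Subgroup.map_id] at this
    have hVnil : Group.IsNilpotent ↥(V.map (e.symm : H →* H)) :=
      @nilpotent_of_mulEquiv _ _ _ _ hV (e.symm.subgroupMap V)
    have := h2 _ hVnil hVU
    rw [this, Subgroup.map_map, ← MulEquiv.coe_monoidHom_trans, MulEquiv.symm_trans_self,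
      MulEquiv.coe_monoidHom_refl, Subgroup.map_id]

lemma map_aut_intNilp {H : Type*} [Group H] (e : H ≃* H) :
    (intNilp H).map (e : H →* H) = intNilp H := by
  have key : ∀ f : H ≃* H, intNilp H ≤ (intNilp H).map (f : H →* H) := by
    intro f x hx
    rw [intNilp, Subgroup.mem_sInf] at hx
    refine ⟨f.symm x, ?_, by simp⟩
    show f.symm x ∈ intNilp H
    rw [intNilp, Subgroup.mem_sInf]
    intro U hU
    have hmem : x ∈ U.map (f : H →* H) :=
      hx _ (IsMaxNilpotentSubgroup.map_aut f hU)
    obtain ⟨u, hu, hux⟩ := hmem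
    have : f.symm x = u := by rw [← hux]; simp
    rwa [this]
  refine le_antisymm ?_ (key e)
  have h := Subgroup.map_mono (f := (e : H →* H)) (key e.symm)
  rwa [Subgroup.map_map, ← MulEquiv.coe_monoidHom_trans, MulEquiv.symm_trans_self,
    MulEquiv.coe_monoidHom_refl, Subgroup.map_id] at h

private lemma ucs_subtype_mem {H : Type*} [Group H] (n : ℕ) :
    ∀ (k : ℕ) (x : ↥(upperCentralSeries H n)), (x : H) ∈ upperCentralSeries H k →
      x ∈ upperCentralSeries ↥(upperCentralSeries H n) k
  | 0, x, hx => by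
      unfold upperCentralSeries at x hx ⊢
      rw [upperCentralSeries_zero, mem_bot] at hx ⊢
      exact Subtype.ext hx
  | k + 1, x, hx => by
      unfold upperCentralSeries at x hx ⊢
      rw [mem_upperCentralSeries_succ_iff] at hx ⊢
      intro y
      exact ucs_subtype_mem n k _ (hx (y : H))

/-- `Z_n(H)`, as a group, has upper central series reaching top at `n`. -/
lemma ucs_ucs_eq_top (H : Type*) [Group H] (n : ℕ) :
    upperCentralSeries ↥(upperCentralSeries H n) n = ⊤ := by
  ext x
  simp only [Subgroup.mem_top, iff_true]
  exact ucs_subtype_mem n n x x.2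

lemma ucs_top_of_equiv {H K : Type*} [Group H] [Group K] (e : H ≃* K) (n : ℕ)
    (h : upperCentralSeries K n = ⊤) : upperCentralSeries H n = ⊤ := by
  unfold upperCentralSeries at h ⊢
  rw [← comap_upperCentralSeries e n, h, Subgroup.comap_top]

lemma ucs_top_of_le {G : Type*} [Group G] {W S : Subgroup G} (h : S ≤ W) {n : ℕ}
    (hW : upperCentralSeries ↥W n = ⊤) : upperCentralSeries ↥S n = ⊤ := by
  haveI : Group.IsNilpotent ↥W := ⟨⟨n, hW⟩⟩
  have h1 : Group.nilpotencyClass ↥W ≤ n :=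
    upperCentralSeries_eq_top_iff_nilpotencyClass_le.mp hW
  have h2 := Subgroup.nilpotencyClass_le (S.subgroupOf W)
  have h3 : upperCentralSeries ↥(S.subgroupOf W) n = ⊤ :=
    upperCentralSeries_eq_top_iff_nilpotencyClass_le.mpr (h2.trans h1)
  exact ucs_top_of_equiv (Subgroup.subgroupOfEquivOfLe h).symm n h3

lemma map_aut_ucs {H : Type*} [Group H] (e : H ≃* H) (k : ℕ) :
    Subgroup.map (e : H →* H) (upperCentralSeries H k) = upperCentralSeries H k := by
  unfold upperCentralSeries
  rw [Subgroup.map_equiv_eq_comap_symm, comap_upperCentralSeries]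

lemma map_aut_map_subtype_ucs {H : Type*} [Group H] (e : H ≃* H) {K : Subgroup H}
    (hK : K.map (e : H →* H) = K) (m : ℕ) :
    ((upperCentralSeries ↥K m).map K.subtype).map (e : H →* H)
      = (upperCentralSeries ↥K m).map K.subtype := by
  set e' : ↥K ≃* ↥K := (e.subgroupMap K).trans (MulEquiv.subgroupCongr hK)
  have hcomm : (e : H →* H).comp K.subtype = K.subtype.comp (e' : ↥K →* ↥K) := by
    ext x; rfl
  rw [Subgroup.map_map, hcomm, ← Subgroup.map_map, map_aut_ucs e' m]

lemma conj_znIntNilp {G : Type*} [Group G] {A : Subgroup G} {a : G} (ha : a ∈ A) (n : ℕ) :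
    (znIntNilp A n).map ((MulAut.conj a : G ≃* G) : G →* G) = znIntNilp A n := by
  set aA : ↥A := ⟨a, ha⟩
  have h1 : (intNilp ↥A).map ((MulAut.conj aA : ↥A ≃* ↥A) : ↥A →* ↥A) = intNilp ↥A :=
    map_aut_intNilp _
  have h2 := map_aut_map_subtype_ucs (MulAut.conj aA : ↥A ≃* ↥A) h1 n
  have hcomm : ((MulAut.conj a : G ≃* G) : G →* G).comp A.subtype
      = A.subtype.comp ((MulAut.conj aA : ↥A ≃* ↥A) : ↥A →* ↥A) := by
    ext x; rfl
  unfold znIntNilp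
  rw [Subgroup.map_map, hcomm, ← Subgroup.map_map, h2]

lemma ucs_znIntNilp_top {G : Type*} [Group G] (A : Subgroup G) (n : ℕ) :
    upperCentralSeries ↥(znIntNilp A n) n = ⊤ := by
  have h := ucs_ucs_eq_top ↥(intNilp ↥A) n
  have heq : znIntNilp A n
      = (upperCentralSeries ↥(intNilp ↥A) n).map (A.subtype.comp (intNilp ↥A).subtype) := by
    unfold znIntNilp; rw [Subgroup.map_map]
  have hinj : Function.Injective (A.subtype.comp (intNilp ↥A).subtype) :=
    A.subtype_injective.comp (intNilp ↥A).subtype_injective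
  have e := Subgroup.equivMapOfInjective (upperCentralSeries ↥(intNilp ↥A) n) _ hinj
  rw [← heq] at e
  exact ucs_top_of_equiv e.symm n h

lemma full_psubgroup_eq_sylow {G : Type*} [Group G] [Finite G] {p : ℕ} [Fact p.Prime]
    {W X : Subgroup G} (hXW : X ≤ W) (hX : IsPGroup p X)
    (hfull : Nat.card X = p ^ (Nat.card G).factorization p) :
    ∃ P : Sylow p ↥W, X.subgroupOf W = ↑P := by
  have hX0 : IsPGroup p (X.subgroupOf W) := hX.comap_subtype
  obtain ⟨P, hP⟩ := hX0.exists_le_sylow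
  refine ⟨P, ?_⟩
  have hcard0 : Nat.card (X.subgroupOf W) = Nat.card X :=
    Nat.card_congr (Subgroup.subgroupOfEquivOfLe hXW).toEquiv
  obtain ⟨m, hm⟩ := IsPGroup.iff_card.mp P.isPGroup'
  have hdvdW : Nat.card ↥(P : Subgroup ↥W) ∣ Nat.card G :=
    ((P : Subgroup ↥W).card_subgroup_dvd_card).trans W.card_subgroup_dvd_card
  have hmle : m ≤ (Nat.card G).factorization p := by
    rw [hm] at hdvdW
    exact (Nat.Prime.pow_dvd_iff_le_factorization (Fact.out)
      (Nat.card_pos (α := G)).ne').mp hdvdW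
  have hcardle : Nat.card ↥(P : Subgroup ↥W) ≤ Nat.card (X.subgroupOf W) := by
    rw [hm, hcard0, hfull]
    exact Nat.pow_le_pow_right (Nat.Prime.pos Fact.out) hmle
  exact Subgroup.eq_of_le_of_card_ge hP hcardle

lemma sylow_unique_in_nilpotent {G : Type*} [Group G] [Finite G] {p : ℕ} [Fact p.Prime]
    {W S T : Subgroup G} (hW : Group.IsNilpotent ↥W) (hSW : S ≤ W) (hTW : T ≤ W)
    (hS : IsPGroup p S) (hT : IsPGroup p T)
    (hScard : Nat.card S = p ^ (Nat.card G).factorization p)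
    (hTcard : Nat.card T = p ^ (Nat.card G).factorization p) : S = T := by
  obtain ⟨P, hP⟩ := full_psubgroup_eq_sylow hSW hS hScard
  obtain ⟨Q, hQ⟩ := full_psubgroup_eq_sylow hTW hT hTcard
  have hnormal : (P : Subgroup ↥W).Normal := by
    have h := (isNilpotent_of_finite_tfae (G := ↥W)).out 0 3
    exact h.mp hW p inferInstance P
  haveI := Sylow.unique_of_normal P hnormal
  have hPQ : P = Q := Subsingleton.elim P Q
  have hST : S.subgroupOf W = T.subgroupOf W := by rw [hP, hQ, hPQ]
  have h1 : (S.subgroupOf W).map W.subtype = (T.subgroupOf W).map W.subtype := by rw [hST]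
  rwa [Subgroup.subgroupOf_map_subtype, Subgroup.subgroupOf_map_subtype,
    inf_of_le_left hSW, inf_of_le_left hTW] at h1


lemma key_sylow {G : Type*} [Group G] [Finite G] (n : ℕ) (A B : Subgroup G)
    (hAB : Nat.Coprime A.index B.index)
    (hz : A ⊓ B ≤ znIntNilp A n ⊓ znIntNilp B n)
    {p : ℕ} (hp : p.Prime) (hpA : ¬ p ∣ A.index) (hpB : ¬ p ∣ B.index) :
    ∃ S : Subgroup G, S.Normal ∧ IsPGroup p S ∧
      Nat.card S = p ^ (Nat.card G).factorization p ∧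
      upperCentralSeries ↥S n = ⊤ := by
  haveI : Fact p.Prime := ⟨hp⟩
  set K := A ⊓ B with hK
  have hAdvd : A.index ∣ K.index := Subgroup.index_dvd_of_le inf_le_left
  have hBdvd : B.index ∣ K.index := Subgroup.index_dvd_of_le inf_le_right
  have hproddvd : A.index * B.index ∣ K.index := hAB.mul_dvd_of_dvd_of_dvd hAdvd hBdvd
  have hKne : K.index ≠ 0 := Subgroup.index_ne_zero_of_finite
  have hKeq : K.index = A.index * B.index :=
    Nat.le_antisymm Subgroup.index_inf_le (Nat.le_of_dvd (Nat.pos_of_ne_zero hKne) hproddvd)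
  have hpK : ¬ p ∣ K.index := by
    rw [hKeq]
    intro h
    rcases (Nat.Prime.dvd_mul hp).mp h with h | h
    · exact hpA h
    · exact hpB h
  obtain ⟨Q⟩ : Nonempty (Sylow p ↥K) := inferInstance
  set S : Subgroup G := (Q : Subgroup ↥K).map K.subtype with hSdef
  have hSK : S ≤ K := Subgroup.map_subtype_le _
  have hSp : IsPGroup p S := Q.isPGroup'.map _
  have hcardG : Nat.card G ≠ 0 := (Nat.card_pos (α := G)).ne'
  have hcardK : Nat.card ↥K ≠ 0 := (Nat.card_pos (α := ↥K)).ne'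
  have hfactor : (Nat.card ↥K).factorization p = (Nat.card G).factorization p := by
    have hmul : Nat.card ↥K * K.index = Nat.card G := Subgroup.card_mul_index K
    have := Nat.factorization_mul hcardK hKne
    rw [hmul] at this
    rw [this]
    simp [Nat.factorization_eq_zero_of_not_dvd hpK]
  have hScard : Nat.card S = p ^ (Nat.card G).factorization p := by
    have : Nat.card S = Nat.card ↥(Q : Subgroup ↥K) :=
      (Nat.card_congr (Subgroup.equivMapOfInjective _ _ K.subtype_injective).toEquiv).symm
    rw [this, Q.card_eq_multiplicity, hfactor]
  have hSWA : S ≤ znIntNilp A n := hSK.trans (hz.trans inf_le_left)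
  have hSWB : S ≤ znIntNilp B n := hSK.trans (hz.trans inf_le_right)
  have hnorm : ∀ (C : Subgroup G), S ≤ znIntNilp C n → C ≤ (Subgroup.normalizer (S : Set G)) := by
    intro C hSW a ha
    have hWnil : Group.IsNilpotent ↥(znIntNilp C n) := ⟨⟨n, ucs_znIntNilp_top C n⟩⟩
    set S' : Subgroup G := S.map ((MulAut.conj a : G ≃* G) : G →* G) with hS'def
    have hS'W : S' ≤ znIntNilp C n := by
      rw [hS'def, ← conj_znIntNilp ha n]
      exact Subgroup.map_mono hSW
    have hS'p : IsPGroup p S' := hSp.map _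
    have hS'card : Nat.card S' = p ^ (Nat.card G).factorization p := by
      rw [hS'def, ← hScard]
      exact (Nat.card_congr (Subgroup.equivMapOfInjective _ _
        (MulAut.conj a : G ≃* G).injective).toEquiv).symm
    have hSS' : S = S' := sylow_unique_in_nilpotent hWnil hSW hS'W hSp hS'p hScard hS'card
    rw [Subgroup.mem_normalizer_iff]
    intro h
    constructor
    · intro hh
      rw [hSS']
      exact ⟨h, hh, rfl⟩
    · intro hh
      rw [hSS'] at hh
      obtain ⟨y, hy, hyx⟩ := hh
      have : y = h := (MulAut.conj a : G ≃* G).injective (by simpa using hyx)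
      rwa [← this]
  have hAnorm : A ≤ (Subgroup.normalizer (S : Set G)) := hnorm A hSWA
  have hBnorm : B ≤ (Subgroup.normalizer (S : Set G)) := hnorm B hSWB
  have hidx : (Subgroup.normalizer (S : Set G)).index = 1 := by
    have h1 : (Subgroup.normalizer (S : Set G)).index ∣ A.index := Subgroup.index_dvd_of_le hAnorm
    have h2 : (Subgroup.normalizer (S : Set G)).index ∣ B.index := Subgroup.index_dvd_of_le hBnorm
    have := Nat.dvd_gcd h1 h2
    rwa [Nat.Coprime.gcd_eq_one hAB, Nat.dvd_one] at this
  have hNormal : S.Normal := Subgroup.normalizer_eq_top_iff.mp (Subgroup.index_eq_one.mp hidx)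
  exact ⟨S, hNormal, hSp, hScard, ucs_top_of_le hSWA (ucs_znIntNilp_top A n)⟩


/-- If a finite group `G` has three subgroups `A₁, A₂, A₃` with
pairwise coprime indices such that `Aᵢ ∩ Aⱼ ≤ Z_n(Int_N(Aᵢ)) ∩ Z_n(Int_N(Aⱼ))`
for all `i ≠ j`, then `G` is nilpotent of class at most `n`. -/
theorem nilpotent_class_le_of_three_subgroups
    (G : Type*) [Group G] [Finite G] (n : ℕ) (A₁ A₂ A₃ : Subgroup G)
    (h₁₂ : Nat.Coprime A₁.index A₂.index)
    (h₁₃ : Nat.Coprime A₁.index A₃.index)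
    (h₂₃ : Nat.Coprime A₂.index A₃.index)
    (hz₁₂ : A₁ ⊓ A₂ ≤ znIntNilp A₁ n ⊓ znIntNilp A₂ n)
    (hz₁₃ : A₁ ⊓ A₃ ≤ znIntNilp A₁ n ⊓ znIntNilp A₃ n)
    (hz₂₃ : A₂ ⊓ A₃ ≤ znIntNilp A₂ n ⊓ znIntNilp A₃ n) :
    Group.IsNilpotent G ∧ upperCentralSeries G n = ⊤ := by
  classical
  have hnotboth : ∀ {p : ℕ}, p.Prime → ∀ {X Y : Subgroup G},
      Nat.Coprime X.index Y.index → p ∣ X.index → ¬ p ∣ Y.index := by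
    intro p hp X Y h hX hY
    have := Nat.dvd_gcd hX hY
    rw [Nat.Coprime.gcd_eq_one h, Nat.dvd_one] at this
    exact Nat.Prime.ne_one hp this
  have exS : ∀ p : ℕ, p.Prime → ∃ S : Subgroup G, S.Normal ∧ IsPGroup p S ∧
      Nat.card S = p ^ (Nat.card G).factorization p ∧
      upperCentralSeries ↥S n = ⊤ := by
    intro p hp
    by_cases h1 : p ∣ A₁.index
    · exact key_sylow n A₂ A₃ h₂₃ hz₂₃ hp (hnotboth hp h₁₂ h1) (hnotboth hp h₁₃ h1)
    · by_cases h2 : p ∣ A₂.index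
      · exact key_sylow n A₁ A₃ h₁₃ hz₁₃ hp h1 (hnotboth hp h₂₃ h2)
      · exact key_sylow n A₁ A₂ h₁₂ hz₁₂ hp h1 h2
  choose Sf hSnormal hSp hScard hSucs using exS
  set pf := (Nat.card G).primeFactors with hpf
  set T : Subgroup G := ⨆ q : pf, Sf q (Nat.prime_of_mem_primeFactors q.2) with hTdef
  have hT : T = ⊤ := by
    rw [← Subgroup.index_eq_one]
    by_contra hne
    obtain ⟨q, hq, hqdvd⟩ := Nat.exists_prime_and_dvd hne
    have hdvdG : q ∣ Nat.card G := hqdvd.trans T.index_dvd_card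
    have hqpf : q ∈ pf := Nat.mem_primeFactors.mpr ⟨hq, hdvdG, (Nat.card_pos (α := G)).ne'⟩
    have hle : Sf q hq ≤ T := by
      have := le_iSup (fun (r : pf) => Sf r (Nat.prime_of_mem_primeFactors r.2))
        (⟨q, hqpf⟩ : pf)
      exact this
    have hqS : q ∣ (Sf q hq).index :=
      hqdvd.trans (Subgroup.index_dvd_of_le hle)
    have hcon : q ^ ((Nat.card G).factorization q + 1) ∣ Nat.card G := by
      calc q ^ ((Nat.card G).factorization q + 1)
          = Nat.card (Sf q hq) * q := by rw [hScard q hq, pow_succ]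
        _ ∣ Nat.card (Sf q hq) * (Sf q hq).index := mul_dvd_mul_left _ hqS
        _ = Nat.card G := Subgroup.card_mul_index _
    exact Nat.pow_succ_factorization_not_dvd (Nat.card_pos (α := G)).ne' hq hcon
  have main : ∀ k : ℕ, ∀ (q : ℕ) (hq : q.Prime),
      (upperCentralSeries ↥(Sf q hq) k).map (Sf q hq).subtype ≤ upperCentralSeries G k := by
    intro k
    induction k with
    | zero =>
      intro q hq
      unfold upperCentralSeries
      rw [upperCentralSeries_zero, upperCentralSeries_zero, Subgroup.map_bot]
    | succ k ih =>
      intro q hq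
      haveI : Fact q.Prime := ⟨hq⟩
      rintro x ⟨z, hz, rfl⟩
      unfold upperCentralSeries
      rw [mem_upperCentralSeries_succ_iff]
      intro y
      have hy : y ∈ T := hT ▸ Subgroup.mem_top y
      set xx : G := (Sf q hq).subtype z with hxx
      show xx * y * xx⁻¹ * y⁻¹ ∈ upperCentralSeries G k
      rw [hTdef] at hy
      refine Subgroup.iSup_induction (fun (r : pf) => Sf r (Nat.prime_of_mem_primeFactors r.2))
        (C := fun y => xx * y * xx⁻¹ * y⁻¹ ∈ upperCentralSeries G k) hy ?_ ?_ ?_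
      · intro r w hw
        show xx * w * xx⁻¹ * w⁻¹ ∈ upperCentralSeries G k
        by_cases hrq : (r : ℕ) = q
        · have hwq : w ∈ Sf q hq := by
            subst hrq
            exact hw
          have hcomm := mem_upperCentralSeries_succ_iff.mp hz ⟨w, hwq⟩
          exact ih q hq ⟨_, hcomm, rfl⟩
        · haveI : Fact (Nat.Prime (r : ℕ)) := ⟨Nat.prime_of_mem_primeFactors r.2⟩
          have hdisj : Disjoint (Sf q hq) (Sf r (Nat.prime_of_mem_primeFactors r.2)) :=
            IsPGroup.disjoint_of_ne q r (fun h => hrq h.symm) _ _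
              (hSp q hq) (hSp r (Nat.prime_of_mem_primeFactors r.2))
          have hc : Commute xx w :=
            Subgroup.commute_of_normal_of_disjoint _ _ (hSnormal q hq)
              (hSnormal r (Nat.prime_of_mem_primeFactors r.2)) hdisj xx w z.2 hw
          have h1 : xx * w * xx⁻¹ * w⁻¹ = 1 := by rw [hc.eq]; group
          rw [h1]
          exact (upperCentralSeries G k).one_mem
      · show xx * 1 * xx⁻¹ * 1⁻¹ ∈ upperCentralSeries G k
        have h1 : xx * 1 * xx⁻¹ * 1⁻¹ = 1 := by group
        rw [h1]
        exact (upperCentralSeries G k).one_mem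
      · intro u v ihu ihv
        show xx * (u * v) * xx⁻¹ * (u * v)⁻¹ ∈ upperCentralSeries G k
        have heq : xx * (u * v) * xx⁻¹ * (u * v)⁻¹
            = (xx * u * xx⁻¹ * u⁻¹) * (u * (xx * v * xx⁻¹ * v⁻¹) * u⁻¹) := by group
        rw [heq]
        exact Subgroup.mul_mem _ ihu
          ((inferInstance : (Subgroup.upperCentralSeries G k).Normal).conj_mem _ ihv u)
  have htop : upperCentralSeries G n = ⊤ := by
    rw [eq_top_iff, ← hT]
    refine iSup_le ?_
    intro r
    intro x hx
    have hr := Nat.prime_of_mem_primeFactors r.2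
    refine main n r hr ⟨⟨x, hx⟩, ?_, rfl⟩
    rw [hSucs r hr]
    trivial
  exact ⟨⟨⟨n, htop⟩⟩, htop⟩
end

section
/- Let G be a finite group and I the intersection of all maximal nilpotent subgroups of G (i.e., subgroups maximal among nilpotent subgroups). If H ≤ G is nilpotent, then the subgroup generated by I and H is nilpotent. -/
/-- If `I` is the intersection of all maximal nilpotent
subgroups of a finite group `G` and `H ≤ G` is nilpotent, then `⟨I, H⟩`
is nilpotent. -/
theorem intNilp_sup_nilpotent
    (G : Type*) [Group G] [Finite G] (H : Subgroup G)
    (hH : Group.IsNilpotent H) :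
    Group.IsNilpotent (intNilp G ⊔ H : Subgroup G) := by
  obtain ⟨U, ⟨hUnil, hHU⟩, hmax⟩ :=
    Set.Finite.exists_maximalFor id {V : Subgroup G | Group.IsNilpotent ↥V ∧ H ≤ V}
      (Set.toFinite _) ⟨H, hH, le_rfl⟩
  have hUmax : IsMaxNilpotentSubgroup U :=
    ⟨hUnil, fun V hV hle => le_antisymm hle (hmax ⟨hV, hHU.trans hle⟩ hle)⟩
  have hle : intNilp G ⊔ H ≤ U :=
    sup_le (sInf_le hUmax) hHU
  haveI : Group.IsNilpotent U := hUnil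
  exact nilpotent_of_mulEquiv (Subgroup.subgroupOfEquivOfLe hle)
end

section
/- Let G be a finite group and I the intersection of all maximal nilpotent subgroups of G. If H ≤ G and H/(H ∩ I) is nilpotent, then H is nilpotent. -/
open Subgroup

section Aux

variable {X : Type*} [Group X]

lemma myNilpotent_of_le {V W : Subgroup X} (h : W ≤ V) (hV : Group.IsNilpotent V) :
    Group.IsNilpotent W := by
  haveI := hV
  exact nilpotent_of_mulEquiv (Subgroup.subgroupOfEquivOfLe h)

lemma exists_maxNilpotent_ge [Finite X] (U : Subgroup X) (hU : Group.IsNilpotent U) :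
    ∃ V, IsMaxNilpotentSubgroup V ∧ U ≤ V := by
  haveI : Finite (Subgroup X) := Finite.of_injective _ SetLike.coe_injective
  obtain ⟨V, hVS, hmax⟩ := Set.Finite.exists_maximalFor id
    {V : Subgroup X | Group.IsNilpotent V ∧ U ≤ V} (Set.toFinite _) ⟨U, hU, le_rfl⟩
  exact ⟨V, ⟨hVS.1, fun V' hV' hle => le_antisymm hle (hmax ⟨hV', hVS.2.trans hle⟩ hle)⟩, hVS.2⟩

lemma commute_of_coprime [Finite X] {p q : ℕ} [Fact p.Prime] [Fact q.Prime] (hpq : p ≠ q)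
    {P V : Subgroup X} (hP : IsPGroup p P) (hPV : P ≤ V)
    (hV : Group.IsNilpotent V) {y : X} (hyV : Subgroup.zpowers y ≤ V)
    (hy : IsPGroup q (Subgroup.zpowers y)) :
    ∀ x ∈ P, x * y = y * x := by
  haveI := hV
  have hnorm : ∀ (p' : ℕ) (_ : Fact p'.Prime) (P' : Sylow p' ↥V), (P' : Subgroup ↥V).Normal :=
    ((isNilpotent_of_finite_tfae (G := ↥V)).out 0 3).mp hV
  obtain ⟨Sp⟩ : Nonempty (Sylow p ↥V) := inferInstance
  obtain ⟨Sq⟩ : Nonempty (Sylow q ↥V) := inferInstance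
  have hSpN : (Sp : Subgroup ↥V).Normal := hnorm p inferInstance Sp
  have hSqN : (Sq : Subgroup ↥V).Normal := hnorm q inferInstance Sq
  haveI := Sylow.unique_of_normal Sp hSpN
  haveI := Sylow.unique_of_normal Sq hSqN
  have hPv : IsPGroup p ↥(P.subgroupOf V) :=
    hP.of_equiv (Subgroup.subgroupOfEquivOfLe hPV).symm
  obtain ⟨Sp', hSp'⟩ := hPv.exists_le_sylow
  have hPSp : P.subgroupOf V ≤ Sp := (Subsingleton.elim Sp' Sp) ▸ hSp'
  have hyv : IsPGroup q ↥((Subgroup.zpowers y).subgroupOf V) :=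
    hy.of_equiv (Subgroup.subgroupOfEquivOfLe hyV).symm
  obtain ⟨Sq', hSq'⟩ := hyv.exists_le_sylow
  have hySq : (Subgroup.zpowers y).subgroupOf V ≤ Sq := (Subsingleton.elim Sq' Sq) ▸ hSq'
  have hdisj : Disjoint (Sp : Subgroup ↥V) (Sq : Subgroup ↥V) :=
    IsPGroup.disjoint_of_ne p q hpq _ _ Sp.isPGroup' Sq.isPGroup'
  intro x hx
  have hxV : x ∈ V := hPV hx
  set x' : ↥V := ⟨x, hxV⟩ with hx'def
  set y' : ↥V := ⟨y, hyV (Subgroup.mem_zpowers y)⟩ with hy'def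
  have hx' : x' ∈ Sp := hPSp (by simpa [Subgroup.mem_subgroupOf] using hx)
  have hy' : y' ∈ Sq := hySq (by
    simp only [Subgroup.mem_subgroupOf]
    exact Subgroup.mem_zpowers y)
  have hz1 : y' * x' * y'⁻¹ * x'⁻¹ ∈ (Sp : Subgroup ↥V) :=
    mul_mem (hSpN.conj_mem x' hx' y') (inv_mem hx')
  have hz2 : y' * x' * y'⁻¹ * x'⁻¹ ∈ (Sq : Subgroup ↥V) := by
    have h2 : x' * y'⁻¹ * x'⁻¹ ∈ (Sq : Subgroup ↥V) := hSqN.conj_mem _ (inv_mem hy') x'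
    have := mul_mem hy' h2
    simp only [mul_assoc] at this ⊢
    exact this
  have hz : y' * x' * y'⁻¹ * x'⁻¹ = 1 := Subgroup.disjoint_def.mp hdisj hz1 hz2
  have hcomm : y' * x' = x' * y' := by
    have h1 : (y' * x') * (x' * y')⁻¹ = 1 := by
      rw [mul_inv_rev]
      simpa [mul_assoc] using hz
    exact mul_inv_eq_one.mp h1
  have := congrArg Subtype.val hcomm
  simpa [hx'def, hy'def] using this.symm

lemma exists_center_elem [Finite X] {K : Subgroup X} (hKn : K.Normal)
    (hK : ∀ V, IsMaxNilpotentSubgroup V → K ≤ V) (hKbot : K ≠ ⊥) :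
    ∃ x : X, x ∈ K ∧ x ∈ Subgroup.center X ∧ x ≠ 1 := by
  haveI := hKn
  obtain ⟨V₀, hV₀, -⟩ := exists_maxNilpotent_ge (⊥ : Subgroup X) inferInstance
  have hKnil : Group.IsNilpotent ↥K := myNilpotent_of_le (hK V₀ hV₀) hV₀.1
  have hcard : 1 < Nat.card ↥K := (Subgroup.one_lt_card_iff_ne_bot K).mpr hKbot
  set p := (Nat.card ↥K).minFac with hpdef
  haveI hp : Fact p.Prime := ⟨Nat.minFac_prime (by omega)⟩
  obtain ⟨PK⟩ : Nonempty (Sylow p ↥K) := inferInstance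
  have htfae : ∀ (p' : ℕ) (_ : Fact p'.Prime) (P' : Sylow p' ↥K), (P' : Subgroup ↥K).Normal :=
    ((isNilpotent_of_finite_tfae (G := ↥K)).out 0 3).mp hKnil
  have hPKnorm : (PK : Subgroup ↥K).Normal := htfae p hp PK
  haveI := hPKnorm
  haveI : (PK : Subgroup ↥K).Characteristic := Sylow.characteristic_of_normal PK hPKnorm
  set P : Subgroup X := (PK : Subgroup ↥K).map K.subtype with hPdef
  haveI hPnormal : P.Normal := inferInstance
  have hPK : P ≤ K := Subgroup.map_subtype_le _
  have hPp : IsPGroup p ↥P := PK.isPGroup'.map _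
  have hpP : p ∣ Nat.card ↥P := by
    rw [hPdef, Nat.card_congr
      ((Subgroup.equivMapOfInjective _ _ K.subtype_injective).symm.toEquiv),
      Sylow.card_eq_multiplicity]
    exact dvd_pow_self p
      (Nat.Prime.factorization_pos_of_dvd hp.out Nat.card_pos.ne' (Nat.minFac_dvd _)).ne'
  set C : Subgroup X := Subgroup.centralizer (P : Set X) with hCdef
  have hCq : ∀ q : ℕ, q.Prime → q ≠ p → ¬ q ∣ C.index := by
    intro q hq hqp hdvd
    haveI : Fact q.Prime := ⟨hq⟩
    obtain ⟨Q⟩ : Nonempty (Sylow q X) := inferInstance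
    have hQC : (Q : Subgroup X) ≤ C := by
      intro y hy
      have hyq : IsPGroup q ↥(Subgroup.zpowers y) :=
        Q.isPGroup'.to_le (Subgroup.zpowers_le.mpr hy)
      have hnily : Group.IsNilpotent ↥(Subgroup.zpowers y) := hyq.isNilpotent
      obtain ⟨V, hV, hyV⟩ := exists_maxNilpotent_ge (Subgroup.zpowers y) hnily
      have hcomm := commute_of_coprime (Ne.symm hqp) hPp (hPK.trans (hK V hV)) hV.1 hyV hyq
      exact Subgroup.mem_centralizer_iff.mpr (fun x hx => hcomm x hx)
    exact Sylow.not_dvd_index Q (hdvd.trans (Subgroup.index_dvd_of_le hQC))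
  obtain ⟨R, hPR⟩ := hPp.exists_le_sylow
  have hRC : (R : Subgroup X) ⊔ C = ⊤ := by
    rw [← Subgroup.index_eq_one]
    by_contra hne
    have h0 : ((R : Subgroup X) ⊔ C).index ≠ 0 := Subgroup.index_ne_zero_of_finite
    have hr : ((R : Subgroup X) ⊔ C).index.minFac.Prime := Nat.minFac_prime hne
    have hdR : ((R : Subgroup X) ⊔ C).index.minFac ∣ (R : Subgroup X).index :=
      (Nat.minFac_dvd _).trans (Subgroup.index_dvd_of_le le_sup_left)
    have hdC : ((R : Subgroup X) ⊔ C).index.minFac ∣ C.index :=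
      (Nat.minFac_dvd _).trans (Subgroup.index_dvd_of_le le_sup_right)
    have hrp : ((R : Subgroup X) ⊔ C).index.minFac ≠ p := by
      intro h
      rw [h] at hdR
      exact Sylow.not_dvd_index R hdR
    exact hCq _ hr hrp hdC
  -- conjugation action of R on P
  set R' : Subgroup (ConjAct X) :=
    (R : Subgroup X).map ConjAct.toConjAct.toMonoidHom with hR'def
  have hR'p : IsPGroup p ↥R' := R.isPGroup'.map _
  have h1fix : (1 : ↥P) ∈ MulAction.fixedPoints ↥R' ↥P := by
    intro g
    exact smul_one g
  obtain ⟨b, hbfix, hb1⟩ :=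
    hR'p.exists_fixed_point_of_prime_dvd_card_of_fixed_point (α := ↥P) hpP h1fix
  have hbcomm : ∀ r ∈ (R : Subgroup X), r * (b : X) * r⁻¹ = (b : X) := by
    intro r hr
    have hg : ConjAct.toConjAct r ∈ R' := ⟨r, hr, rfl⟩
    have h1 : ((ConjAct.toConjAct r) • b : ↥P) = b := hbfix ⟨ConjAct.toConjAct r, hg⟩
    have hval := congrArg Subtype.val h1
    rw [ConjAct.Subgroup.val_conj_smul] at hval
    simpa [ConjAct.smul_def] using hval
  refine ⟨(b : X), hPK b.2, ?_, ?_⟩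
  · rw [Subgroup.mem_center_iff]
    intro g
    have hgmem : g ∈ (R : Subgroup X) ⊔ C := hRC ▸ Subgroup.mem_top g
    have hle : (R : Subgroup X) ⊔ C ≤ Subgroup.centralizer {(b : X)} := by
      refine sup_le ?_ ?_
      · intro r hr
        rw [Subgroup.mem_centralizer_iff]
        intro h hh
        rw [Set.mem_singleton_iff] at hh
        subst hh
        have := hbcomm r hr
        calc (b : X) * r = r * (b:X) * r⁻¹ * r := by rw [this]
        _ = r * (b : X) := by group
      · intro c hc
        rw [Subgroup.mem_centralizer_iff]
        intro h hh
        rw [Set.mem_singleton_iff] at hh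
        subst hh
        exact Subgroup.mem_centralizer_iff.mp hc (b : X) b.2
    have hgc := hle hgmem
    exact (Subgroup.mem_centralizer_iff.mp hgc (b : X) rfl).symm
  · intro h
    exact hb1 (Subtype.ext h.symm)

lemma nilpotent_of_surj_ker_le_center {Y : Type*} [Group Y] (f : X →* Y)
    (hker : f.ker ≤ Subgroup.center X) (hY : Group.IsNilpotent Y) :
    Group.IsNilpotent X :=
  by haveI := hY; exact _root_.isNilpotent_of_ker_le_center f hker

end Aux

lemma key_nilpotent (n : ℕ) : ∀ (X : Type u) [Group X] [Finite X], Nat.card X = n →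
    ∀ (K : Subgroup X) [K.Normal], (∀ V, IsMaxNilpotentSubgroup V → K ≤ V) →
    Group.IsNilpotent (X ⧸ K) → Group.IsNilpotent X := by
  induction n using Nat.strong_induction_on with
  | _ n ih =>
    intro X _ _ hcard K hKnormal hK hq
    by_cases hKbot : K = ⊥
    · refine nilpotent_of_surj_ker_le_center (QuotientGroup.mk' K) ?_ hq
      rw [QuotientGroup.ker_mk', hKbot]
      exact bot_le
    · obtain ⟨x, hxK, hxZ, hx1⟩ := exists_center_elem hKnormal hK hKbot
      set N : Subgroup X := K ⊓ Subgroup.center X with hNdef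
      haveI hNnormal : N.Normal := by
        constructor
        intro m hm g
        refine ⟨‹K.Normal›.conj_mem m hm.1 g, ?_⟩
        have : g * m * g⁻¹ = m := by
          have := (Subgroup.mem_center_iff.mp hm.2 g).symm
          rw [← this]
          group
        rw [this]
        exact hm.2
      have hNne : N ≠ ⊥ := by
        intro h
        have : x ∈ N := ⟨hxK, hxZ⟩
        rw [h, Subgroup.mem_bot] at this
        exact hx1 this
      have hcardlt : Nat.card (X ⧸ N) < n := by
        have h1 : Nat.card X = Nat.card (X ⧸ N) * Nat.card N :=
          Subgroup.card_eq_card_quotient_mul_card_subgroup N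
        have h2 : 1 < Nat.card N := (Subgroup.one_lt_card_iff_ne_bot N).mpr hNne
        have h3 : 0 < Nat.card (X ⧸ N) := Nat.card_pos
        rw [← hcard, h1]
        nlinarith
      set π := QuotientGroup.mk' N with hπ
      have hπsurj : Function.Surjective π := QuotientGroup.mk'_surjective N
      set Kb : Subgroup (X ⧸ N) := K.map π with hKbdef
      haveI hKbnormal : Kb.Normal := ‹K.Normal›.map π hπsurj
      have hKb : ∀ V, IsMaxNilpotentSubgroup V → Kb ≤ V := by
        intro Ub hUb
        set W : Subgroup X := Ub.comap π with hWdef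
        have hWnil : Group.IsNilpotent ↥W := by
          have hmem : ∀ w : ↥W, (π.domRestrict W) w ∈ Ub := fun w => w.2
          haveI := hUb.1
          refine _root_.isNilpotent_of_ker_le_center
            ((π.domRestrict W).codRestrict Ub hmem) ?_
          rw [MonoidHom.ker_codRestrict]
          intro w hw
          rw [MonoidHom.mem_ker, MonoidHom.domRestrict_apply,
            ← MonoidHom.mem_ker, QuotientGroup.ker_mk'] at hw
          rw [Subgroup.mem_center_iff]
          intro g
          exact Subtype.ext (Subgroup.mem_center_iff.mp hw.2 g)
        obtain ⟨U, hU, hWU⟩ := exists_maxNilpotent_ge W hWnil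
        have hUim : Group.IsNilpotent ↥(U.map π) := by
          haveI := hU.1
          exact nilpotent_of_surjective (π.subgroupMap U) (π.subgroupMap_surjective U)
        have hWmap : W.map π = Ub := by
          rw [hWdef, Subgroup.map_comap_eq_self]
          rw [MonoidHom.range_eq_top_of_surjective π hπsurj]
          exact le_top
        have hUbU : Ub ≤ U.map π := hWmap ▸ Subgroup.map_mono hWU
        have hUbeq : Ub = U.map π := hUb.2 _ hUim hUbU
        rw [hUbeq]
        exact Subgroup.map_mono (hK U hU)
      have hqb : Group.IsNilpotent ((X ⧸ N) ⧸ Kb) := by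
        set φ : X →* (X ⧸ N) ⧸ Kb := (QuotientGroup.mk' Kb).comp π with hφ
        have hφsurj : Function.Surjective φ :=
          (QuotientGroup.mk'_surjective Kb).comp hπsurj
        have hKker : K ≤ φ.ker := by
          intro k hk
          rw [MonoidHom.mem_ker, MonoidHom.comp_apply, ← MonoidHom.mem_ker,
            QuotientGroup.ker_mk']
          exact Subgroup.mem_map_of_mem π hk
        haveI := hq
        refine nilpotent_of_surjective (QuotientGroup.lift K φ hKker) ?_
        intro z
        obtain ⟨x, rfl⟩ := hφsurj z
        exact ⟨QuotientGroup.mk x, rfl⟩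
      have hXbar : Group.IsNilpotent (X ⧸ N) :=
        ih _ hcardlt (X ⧸ N) rfl Kb hKb hqb
      refine nilpotent_of_surj_ker_le_center π ?_ hXbar
      rw [hπ, QuotientGroup.ker_mk']
      exact inf_le_right

theorem nilpotent_of_quotient_by_intNilp
    (G : Type*) [Group G] [Finite G] (H : Subgroup G)
    [hn : ((H ⊓ intNilp G).subgroupOf H).Normal]
    (hq : Group.IsNilpotent (H ⧸ (H ⊓ intNilp G).subgroupOf H)) :
    Group.IsNilpotent H := by
  refine key_nilpotent (Nat.card ↥H) ↥H rfl ((H ⊓ intNilp G).subgroupOf H) ?_ hq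
  intro U hU
  haveI := hU.1
  have hUnil : Group.IsNilpotent ↥(U.map H.subtype) :=
    nilpotent_of_mulEquiv (Subgroup.equivMapOfInjective U H.subtype H.subtype_injective)
  obtain ⟨V, hV, hMV⟩ := exists_maxNilpotent_ge (U.map H.subtype) hUnil
  have hW : Group.IsNilpotent ↥((H ⊓ V).subgroupOf H) := by
    have h1 : Group.IsNilpotent ↥(H ⊓ V) := myNilpotent_of_le inf_le_right hV.1
    haveI := h1
    exact nilpotent_of_mulEquiv (Subgroup.subgroupOfEquivOfLe inf_le_left).symm
  have hUW : U ≤ (H ⊓ V).subgroupOf H := by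
    intro u hu
    rw [Subgroup.mem_subgroupOf]
    exact ⟨u.2, hMV ⟨u, hu, rfl⟩⟩
  have hUeq : U = (H ⊓ V).subgroupOf H := hU.2 _ hW hUW
  rw [hUeq]
  intro x hx
  rw [Subgroup.mem_subgroupOf] at hx ⊢
  have hIV : intNilp G ≤ V := sInf_le hV
  exact ⟨hx.1, hIV hx.2⟩
end

section
/- Let G be a finite group and H, E subgroups of G. Then Int_N(H) ∩ E ≤ Int_N(H ∩ E), where Int_N(K) denotes the intersection of all maximal nilpotent subgroups of K. -/
lemma nilpotent_of_le {K : Type*} [Group K] {A B : Subgroup K} (h : A ≤ B)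
    (hB : Group.IsNilpotent B) : Group.IsNilpotent A := by
  haveI := hB
  exact (Group.isNilpotent_congr (Subgroup.subgroupOfEquivOfLe h)).mp
    (Subgroup.isNilpotent (A.subgroupOf B))

lemma exists_max_nilpotent_ge {K : Type*} [Group K] [Finite K] (A : Subgroup K)
    (hA : Group.IsNilpotent A) : ∃ U, IsMaxNilpotentSubgroup U ∧ A ≤ U := by
  have hfin : Finite (Subgroup K) :=
    Finite.of_injective (fun S : Subgroup K => (S : Set K)) SetLike.coe_injective
  obtain ⟨U, ⟨hUn, hAU⟩, hUmax⟩ :=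
    Set.Finite.exists_maximalFor id {U : Subgroup K | Group.IsNilpotent U ∧ A ≤ U}
      (Set.toFinite _) ⟨A, hA, le_refl A⟩
  refine ⟨U, ⟨hUn, fun V hV hUV => le_antisymm hUV (hUmax ⟨hV, le_trans hAU hUV⟩ hUV)⟩, hAU⟩

/-- For subgroups `H`, `E` of a finite group `G`,
`Int_N(H) ∩ E ≤ Int_N(H ∩ E)`. -/
theorem intNilp_inf_le
    (G : Type*) [Group G] [Finite G] (H E : Subgroup G) :
    Subgroup.map H.subtype (intNilp H) ⊓ E ≤
      Subgroup.map (H ⊓ E).subtype (intNilp (H ⊓ E : Subgroup G)) := by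
  rintro x ⟨⟨y, hy, hyx⟩, hxE⟩
  have hxH : x ∈ H := hyx ▸ y.2
  have hxInt : (⟨x, hxH⟩ : H) ∈ intNilp H := by
    have : y = (⟨x, hxH⟩ : H) := Subtype.ext hyx
    exact this ▸ hy
  refine ⟨⟨x, hxH, hxE⟩, ?_, rfl⟩
  simp only [intNilp, SetLike.mem_coe, Subgroup.mem_sInf]
  intro W hW
  -- A : the image of W in G
  set A : Subgroup G := W.map (H ⊓ E).subtype with hA
  have hAHE : A ≤ H ⊓ E := by
    rintro a ⟨w, _, rfl⟩; exact w.2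
  have hAH : A ≤ H := le_trans hAHE inf_le_left
  have hAnilp : Group.IsNilpotent A := by
    haveI := hW.1
    exact (Group.isNilpotent_congr
      (W.equivMapOfInjective (H ⊓ E).subtype (H ⊓ E).subtype_injective)).mp
      (by infer_instance)
  have hA'nilp : Group.IsNilpotent (A.subgroupOf H) :=
    (Group.isNilpotent_congr (Subgroup.subgroupOfEquivOfLe hAH)).mpr hAnilp
  obtain ⟨U, hUmax, hAU⟩ := exists_max_nilpotent_ge (A.subgroupOf H) hA'nilp
  have hxU : (⟨x, hxH⟩ : H) ∈ U := by
    simp only [intNilp, SetLike.mem_coe, Subgroup.mem_sInf] at hxInt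
    exact hxInt U hUmax
  -- the candidate maximal nilpotent subgroup of H ⊓ E containing W
  have hUGnilp : Group.IsNilpotent (U.map H.subtype : Subgroup G) := by
    haveI := hUmax.1
    exact (Group.isNilpotent_congr
      (U.equivMapOfInjective H.subtype H.subtype_injective)).mp (by infer_instance)
  set Vg : Subgroup G := U.map H.subtype ⊓ (H ⊓ E) with hVg
  set V : Subgroup (H ⊓ E : Subgroup G) := Vg.subgroupOf (H ⊓ E) with hV
  have hVnilp : Group.IsNilpotent V :=
    (Group.isNilpotent_congr (Subgroup.subgroupOfEquivOfLe (inf_le_right (a := U.map H.subtype))))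
      |>.mpr (nilpotent_of_le inf_le_left hUGnilp)
  have hWV : W ≤ V := by
    intro w hw
    have hwA : (w : G) ∈ A := ⟨w, hw, rfl⟩
    have hwH : (w : G) ∈ H := hAH hwA
    have hwU : (⟨(w : G), hwH⟩ : H) ∈ U := hAU (by simpa [Subgroup.mem_subgroupOf] using hwA)
    exact ⟨⟨⟨(w : G), hwH⟩, hwU, rfl⟩, w.2⟩
  have hWeq : W = V := hW.2 V hVnilp hWV
  rw [hWeq]
  exact ⟨⟨⟨x, hxH⟩, hxU, rfl⟩, ⟨hxH, hxE⟩⟩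
end

section
/- Let G be a finite group, N ⊴ G, and H ≤ G. Then Int_N(H)·N/N ≤ Int_N(HN/N), where Int_N(K) denotes the intersection of all maximal nilpotent subgroups of the finite group K. -/
open Subgroup

-- Gaschütz
lemma gaschutz {G : Type*} [Group G] [Finite G]
    (h : Group.IsNilpotent (G ⧸ frattini G)) : Group.IsNilpotent G := by
  have q := (isNilpotent_of_finite_tfae (G := G)).out 0 3
  rw [q]; clear q
  intro p hp P
  set π := QuotientGroup.mk' (frattini G) with hπdef
  have hπ : Function.Surjective π := QuotientGroup.mk'_surjective _
  have hPQnormal : ((P.mapSurjective hπ : Subgroup (G ⧸ frattini G))).Normal :=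
    by
    have q := (isNilpotent_of_finite_tfae (G := G ⧸ frattini G)).out 0 3
    exact (q.mp h) p hp _
  have hQ : ((P : Subgroup G) ⊔ frattini G).Normal := by
    have : comap π (P.mapSurjective hπ : Subgroup (G ⧸ frattini G)) =
        (P : Subgroup G) ⊔ frattini G := by
      rw [Sylow.coe_mapSurjective, comap_map_eq, QuotientGroup.ker_mk']
    rw [← this]
    exact hPQnormal.comap π
  haveI := hQ
  have hsup := Sylow.normalizer_sup_eq_top' P (le_sup_left : (P:Subgroup G) ≤ (P:Subgroup G) ⊔ frattini G)
  have h2 : normalizer ((P : Subgroup G) : Set G) ⊔ frattini G = ⊤ := by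
    rw [← sup_assoc] at hsup
    have e : normalizer ((P : Subgroup G) : Set G) ⊔ (P : Subgroup G) =
        normalizer ((P : Subgroup G) : Set G) := sup_eq_left.mpr le_normalizer
    rw [← e]
    exact hsup
  exact normalizer_eq_top_iff.mp (frattini_nongenerating h2)

lemma exists_nilpotent_map_eq_top {A B : Type*} [Group A] [Group B] [Finite A]
    (f : A →* B) (hf : Function.Surjective f) (hB : Group.IsNilpotent B) :
    ∃ M : Subgroup A, Group.IsNilpotent M ∧ Subgroup.map f M = ⊤ := by
  have htop : (⊤ : Subgroup A) ∈ {M : Subgroup A | Subgroup.map f M = ⊤} := by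
    simp only [Set.mem_setOf_eq, ← MonoidHom.range_eq_map]
    exact f.range_eq_top_of_surjective hf
  obtain ⟨M, hM, hmin⟩ := Set.Finite.exists_minimalFor id _ (Set.toFinite _) ⟨⊤, htop⟩
  simp only [id] at hmin
  refine ⟨M, ?_, hM⟩
  -- the kernel part inside M
  set K : Subgroup ↥M := comap M.subtype f.ker with hK
  have hKfr : K ≤ frattini ↥M := by
    rw [frattini, Order.radical]
    refine le_iInf₂ ?_
    rintro L hL
    -- hL : IsCoatom L
    by_contra hKL
    have hLM : L ⊔ K = ⊤ := hL.2 _ (lt_of_le_of_ne le_sup_left (by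
      intro e
      exact hKL (e ▸ le_sup_right)))
    have hmapL : Subgroup.map f (Subgroup.map M.subtype L) = ⊤ := by
      have h1 : Subgroup.map M.subtype (L ⊔ K) = Subgroup.map M.subtype ⊤ := by rw [hLM]
      have h2 : Subgroup.map f (Subgroup.map M.subtype K) ≤ ⊥ := by
        rintro x ⟨y, hy, rfl⟩
        obtain ⟨z, hz, rfl⟩ := hy
        simpa [hK, Subgroup.mem_subgroupOf] using hz
      calc Subgroup.map f (Subgroup.map M.subtype L)
          = Subgroup.map f (Subgroup.map M.subtype L) ⊔ ⊥ := by rw [sup_bot_eq]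
        _ = Subgroup.map f (Subgroup.map M.subtype L) ⊔ Subgroup.map f (Subgroup.map M.subtype K) := by
            rw [eq_comm, sup_eq_left.mpr (le_trans h2 bot_le), sup_bot_eq]
        _ = Subgroup.map f (Subgroup.map M.subtype (L ⊔ K)) := by rw [Subgroup.map_sup, Subgroup.map_sup]
        _ = Subgroup.map f M := by rw [hLM, ← MonoidHom.range_eq_map, range_subtype]
        _ = ⊤ := hM
    have hle : Subgroup.map M.subtype L ≤ M := map_subtype_le L
    have heq : Subgroup.map M.subtype L = M := le_antisymm hle (hmin hmapL hle)
    -- but L is a coatom, so map subtype L < M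
    have : L = ⊤ := by
      apply map_injective M.subtype_injective
      rw [heq, ← MonoidHom.range_eq_map, range_subtype]
    exact hL.1 this
  -- M surjects onto B
  have hsurj : Function.Surjective (f.comp M.subtype) := by
    intro b
    have : b ∈ Subgroup.map f M := hM ▸ mem_top b
    obtain ⟨a, ha, rfl⟩ := this
    exact ⟨⟨a, ha⟩, rfl⟩
  have hker : (f.comp M.subtype).ker = K := by rw [hK, MonoidHom.comap_ker]
  apply gaschutz
  have e : (↥M ⧸ (f.comp M.subtype).ker) ≃* B :=
    QuotientGroup.quotientKerEquivOfSurjective _ hsurj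
  have hnil : Group.IsNilpotent (↥M ⧸ (f.comp M.subtype).ker) :=
    nilpotent_of_mulEquiv e.symm
  have : Function.Surjective
      (QuotientGroup.map (f.comp M.subtype).ker (frattini ↥M) (MonoidHom.id _)
        (by rw [hker]; simpa using hKfr)) := by
    intro x
    obtain ⟨y, rfl⟩ := QuotientGroup.mk_surjective x
    exact ⟨QuotientGroup.mk y, rfl⟩
  exact nilpotent_of_surjective _ this

/-- every nilpotent subgroup of a finite group is contained in a maximal one -/
lemma exists_maxNilpotent_le {A : Type*} [Group A] [Finite A] (M0 : Subgroup A)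
    (h0 : Group.IsNilpotent M0) :
    ∃ M : Subgroup A, IsMaxNilpotentSubgroup M ∧ M0 ≤ M := by
  obtain ⟨M, hM, hmax⟩ := Set.Finite.exists_maximalFor id
    {M : Subgroup A | Group.IsNilpotent M ∧ M0 ≤ M} (Set.toFinite _) ⟨M0, h0, le_rfl⟩
  simp only [id] at hmax
  exact ⟨M, ⟨hM.1, fun V hV hle => le_antisymm hle (hmax ⟨hV, hM.2.trans hle⟩ hle)⟩, hM.2⟩


lemma map_intNilp_le {A B : Type*} [Group A] [Group B] [Finite A]
    (f : A →* B) (hf : Function.Surjective f) :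
    Subgroup.map f (intNilp A) ≤ intNilp B := by
  rintro b ⟨a, ha, rfl⟩
  rw [intNilp, Subgroup.mem_sInf]
  rintro U ⟨hUnil, hUmax⟩
  -- restrict f to a surjection from comap f U onto U
  set V : Subgroup A := comap f U with hV
  set f' : ↥V →* ↥U := f.subgroupComap U with hf'
  have hf's : Function.Surjective f' := by
    rintro ⟨u, hu⟩
    obtain ⟨x, rfl⟩ := hf u
    exact ⟨⟨x, hu⟩, rfl⟩
  obtain ⟨M', hM'nil, hM'top⟩ := exists_nilpotent_map_eq_top f' hf's hUnil
  set M0 : Subgroup A := Subgroup.map V.subtype M' with hM0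
  have hM0nil : Group.IsNilpotent M0 :=
    nilpotent_of_mulEquiv (M'.equivMapOfInjective V.subtype V.subtype_injective)
  have hM0U : Subgroup.map f M0 = U := by
    have : f.comp V.subtype = U.subtype.comp f' := by ext x; rfl
    rw [hM0, Subgroup.map_map, this, ← Subgroup.map_map, hM'top,
      ← MonoidHom.range_eq_map, range_subtype]
  obtain ⟨M, ⟨hMnil, hMmax⟩, hM0M⟩ := exists_maxNilpotent_le M0 hM0nil
  have hamem : a ∈ M := by
    have : intNilp A ≤ M := sInf_le ⟨hMnil, hMmax⟩
    exact this ha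
  have hmapnil : Group.IsNilpotent (Subgroup.map f M) :=
    nilpotent_of_surjective (f.subgroupMap M) (f.subgroupMap_surjective M)
  have hUeq : U = Subgroup.map f M := hUmax _ hmapnil (hM0U ▸ Subgroup.map_mono hM0M)
  rw [hUeq]
  exact ⟨a, hamem, rfl⟩


/-- For `N ⊴ G` and `H ≤ G`,
`Int_N(H) N / N ≤ Int_N(HN/N)` in `G/N`. -/
theorem intNilp_map_quotient_le
    (G : Type*) [Group G] [Finite G] (N : Subgroup G) [N.Normal]
    (H : Subgroup G) :
    Subgroup.map (QuotientGroup.mk' N) (Subgroup.map H.subtype (intNilp H)) ≤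
      Subgroup.map (Subgroup.map (QuotientGroup.mk' N) H).subtype
        (intNilp (Subgroup.map (QuotientGroup.mk' N) H)) := by
  set π := QuotientGroup.mk' N with hπ
  set f : ↥H →* ↥(Subgroup.map π H) := π.subgroupMap H with hfdef
  have hfs := π.subgroupMap_surjective H
  have key := map_intNilp_le f hfs
  rintro x ⟨y, hy, rfl⟩
  obtain ⟨m, hm, rfl⟩ := hy
  exact ⟨f m, key ⟨m, hm, rfl⟩, rfl⟩
end

section
/- Let G be a finite group, N ⊴ G with N ≤ U ≤ G, such that U/N is a maximal nilpotent subgroup of G/N (maximal among nilpotent subgroups of G/N). Then U = U₀N for some maximal nilpotent subgroup U₀ of G. -/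
open Pointwise

/-- The image of a nilpotent subgroup is nilpotent. -/
lemma aux_nilpotent_map {G H : Type*} [Group G] [Group H] (f : G →* H) (K : Subgroup G)
    (h : Group.IsNilpotent K) : Group.IsNilpotent (K.map f) := by
  have hr : (f.comp K.subtype).range = K.map f := by
    rw [MonoidHom.range_comp, Subgroup.range_subtype]
  have : Group.IsNilpotent (f.comp K.subtype).range :=
    nilpotent_of_surjective (f.comp K.subtype).rangeRestrict
      (f.comp K.subtype).rangeRestrict_surjective
  exact hr ▸ this

/-- The image of a coatom containing the kernel under a surjective hom is a coatom. -/
lemma aux_coatom_map {G H : Type*} [Group G] [Group H] (f : G →* H)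
    (hf : Function.Surjective f) (M : Subgroup G) (hker : f.ker ≤ M) (hM : IsCoatom M) :
    IsCoatom (M.map f) := by
  have hcm : (M.map f).comap f = M := by
    rw [Subgroup.comap_map_eq, sup_eq_left.mpr hker]
  constructor
  · intro htop
    apply hM.1
    have := congrArg (Subgroup.comap f) htop
    rw [hcm, Subgroup.comap_top] at this
    exact this
  · intro B hB
    have hle' : M ≤ B.comap f := hcm ▸ Subgroup.comap_mono hB.le
    have h1 : M < B.comap f := by
      refine lt_of_le_of_ne hle' fun hEq => hB.ne ?_
      rw [← Subgroup.map_comap_eq_self_of_surjective hf B, ← hEq]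
    have h2 : B.comap f = ⊤ := hM.2 _ h1
    rw [← Subgroup.map_comap_eq_self_of_surjective hf B, h2, Subgroup.map_top_of_surjective _ hf]

/-- Saturation: a finite group with nilpotent quotient by a subgroup of the
Frattini subgroup is nilpotent. -/
lemma aux_nilpotent_of_quotient {V : Type*} [Group V] [Finite V] (K : Subgroup V) [K.Normal]
    (hK : K ≤ frattini V) (h : Group.IsNilpotent (V ⧸ K)) : Group.IsNilpotent V := by
  have htfae := (isNilpotent_of_finite_tfae (G := V)).out 0 2
  rw [htfae]
  intro M hM
  have hKM : K ≤ M := hK.trans (frattini_le_coatom hM)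
  have hker : (QuotientGroup.mk' K).ker ≤ M := by rwa [QuotientGroup.ker_mk']
  have hco : IsCoatom (M.map (QuotientGroup.mk' K)) :=
    aux_coatom_map _ (QuotientGroup.mk'_surjective K) M hker hM
  have hiff : Group.IsNilpotent (V ⧸ K) ↔ ∀ H : Subgroup (V ⧸ K), IsCoatom H → H.Normal :=
    (isNilpotent_of_finite_tfae (G := V ⧸ K)).out 0 2
  have hnorm : (M.map (QuotientGroup.mk' K)).Normal := hiff.mp h _ hco
  have hM' : (M.map (QuotientGroup.mk' K)).comap (QuotientGroup.mk' K) = M := by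
    rw [Subgroup.comap_map_eq, QuotientGroup.ker_mk', sup_eq_left.mpr hKM]
  rw [← hM']
  exact hnorm.comap _

/-- A subgroup whose image mod `N` is nilpotent and which meets `N` inside its
Frattini subgroup is nilpotent. -/
lemma aux_nilpotent_of_map {G : Type*} [Group G] [Finite G] (N : Subgroup G) [N.Normal]
    (V : Subgroup G) (hfrat : N.subgroupOf V ≤ frattini V)
    (h : Group.IsNilpotent (V.map (QuotientGroup.mk' N))) : Group.IsNilpotent V := by
  set φ := (QuotientGroup.mk' N).comp V.subtype with hφ
  have hker : φ.ker = N.subgroupOf V := by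
    rw [hφ, ← MonoidHom.comap_ker, QuotientGroup.ker_mk']
    rfl
  have hrange : φ.range = V.map (QuotientGroup.mk' N) := by
    rw [hφ, MonoidHom.range_comp, Subgroup.range_subtype]
  have h1 : Group.IsNilpotent φ.range := hrange ▸ h
  have h2 : Group.IsNilpotent (↥V ⧸ φ.ker) :=
    nilpotent_of_mulEquiv (QuotientGroup.quotientKerEquivRange φ).symm
  exact aux_nilpotent_of_quotient φ.ker (by rw [hker]; exact hfrat) h2

/-- If `N ⊴ G`, `N ≤ U ≤ G` and `U/N` is a maximal nilpotent
subgroup of `G/N`, then `U = U₀N` for some maximal nilpotent subgroup `U₀`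
of `G`. -/
theorem maximal_nilpotent_of_quotient_lifts
    (G : Type*) [Group G] [Finite G] (N : Subgroup G) [N.Normal]
    (U : Subgroup G) (hNU : N ≤ U)
    (hmax : IsMaxNilpotentSubgroup (Subgroup.map (QuotientGroup.mk' N) U)) :
    ∃ U₀ : Subgroup G, IsMaxNilpotentSubgroup U₀ ∧
      (U₀ : Set G) * (N : Set G) = (U : Set G) := by
  classical
  -- Choose `V` minimal among subgroups of `U` with `V ⊔ N = U`.
  set S : Set (Subgroup G) := {V | V ≤ U ∧ V ⊔ N = U} with hS
  have hUS : U ∈ S := ⟨le_rfl, sup_eq_left.mpr hNU⟩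
  obtain ⟨V, hVS, hVmin⟩ :=
    Set.Finite.exists_minimalFor id S (Set.toFinite S) ⟨U, hUS⟩
  obtain ⟨hVU, hVN⟩ := hVS
  -- `V ∩ N ≤ Φ(V)`.
  have hfrat : N.subgroupOf V ≤ frattini V := by
    refine le_iInf fun M => le_iInf fun hM => ?_
    by_contra hnle
    have hsup : M ⊔ N.subgroupOf V = ⊤ := hM.2 _ (lt_of_le_of_ne le_sup_left
      (fun hEq => hnle (le_sup_right.trans_eq hEq.symm)))
    -- push to `G`: `W := M.map V.subtype` satisfies `W ⊔ N = U`, `W ≤ V`.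
    set W := M.map V.subtype with hW
    have htopmap : Subgroup.map V.subtype ⊤ = V := by
      rw [← MonoidHom.range_eq_map, Subgroup.range_subtype]
    have hWV : W ≤ V := Subgroup.map_subtype_le M
    have hVW : W ⊔ (N ⊓ V) = V := by
      have h := congrArg (Subgroup.map V.subtype) hsup
      rwa [Subgroup.map_sup, Subgroup.subgroupOf_map_subtype, htopmap] at h
    have hWN : W ⊔ N = U := by
      have h : W ⊔ N = (W ⊔ (N ⊓ V)) ⊔ N := by
        rw [sup_assoc, sup_eq_right.mpr (inf_le_left : N ⊓ V ≤ N)]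
      rw [h, hVW, hVN]
    have hWS : W ∈ S := ⟨hWV.trans hVU, hWN⟩
    have hWeqV : V = W := le_antisymm (hVmin hWS hWV) hWV
    -- then `M = ⊤`, contradiction with `M` a coatom.
    apply hM.1
    apply Subgroup.map_injective (Subgroup.subtype_injective V)
    rw [htopmap, ← hW]
    exact hWeqV.symm
  -- map of `V` equals map of `U`, hence nilpotent.
  have hmapV : V.map (QuotientGroup.mk' N) = U.map (QuotientGroup.mk' N) := by
    have h := congrArg (Subgroup.map (QuotientGroup.mk' N)) hVN
    have hNbot : Subgroup.map (QuotientGroup.mk' N) N = ⊥ := by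
      rw [Subgroup.map_eq_bot_iff, QuotientGroup.ker_mk']
    rwa [Subgroup.map_sup, hNbot, sup_bot_eq] at h
  have hVnil : Group.IsNilpotent V :=
    aux_nilpotent_of_map N V hfrat (hmapV ▸ hmax.1)
  -- extend `V` to a maximal nilpotent subgroup `U₀`.
  set T : Set (Subgroup G) := {W | Group.IsNilpotent W ∧ V ≤ W} with hT
  obtain ⟨U₀, hU₀T, hU₀max⟩ :=
    Set.Finite.exists_maximalFor id T (Set.toFinite T) ⟨V, hVnil, le_rfl⟩
  have hU₀nil : Group.IsNilpotent U₀ := hU₀T.1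
  have hU₀maxnil : IsMaxNilpotentSubgroup U₀ :=
    ⟨hU₀nil, fun W hW hle => le_antisymm hle (hU₀max ⟨hW, hU₀T.2.trans hle⟩ hle)⟩
  refine ⟨U₀, hU₀maxnil, ?_⟩
  -- `U₀ ⊔ N = U`.
  have hmapU₀ : Group.IsNilpotent (U₀.map (QuotientGroup.mk' N)) :=
    aux_nilpotent_map _ _ hU₀nil
  have hle : U.map (QuotientGroup.mk' N) ≤ U₀.map (QuotientGroup.mk' N) := by
    rw [← hmapV]
    exact Subgroup.map_mono hU₀T.2
  have heq : U.map (QuotientGroup.mk' N) = U₀.map (QuotientGroup.mk' N) :=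
    hmax.2 _ hmapU₀ hle
  have hsup : U₀ ⊔ N = U := by
    have h1 := congrArg (Subgroup.comap (QuotientGroup.mk' N)) heq
    rw [Subgroup.comap_map_eq, Subgroup.comap_map_eq, QuotientGroup.ker_mk'] at h1
    rw [← h1, sup_eq_left.mpr hNU]
  rw [← Subgroup.mul_normal, hsup]
end

section
/- Let G be a finite group with hypercentre Z = Z_∞(G). If H is a nilpotent subgroup of G, then HZ is a nilpotent subgroup of G. Consequently Z_∞(G) is contained in every maximal nilpotent subgroup of G. -/
/-- The hypercentre of a group: the union (supremum) of the upper central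
series; for a finite group this is its last, stabilizing, term. -/
def hypercentre (G : Type*) [Group G] : Subgroup G :=
  ⨆ n : ℕ, upperCentralSeries G n

/-- The upper central series of the ambient group, intersected with a
subgroup, is contained in the upper central series of the subgroup. -/
lemma comap_upperCentralSeries_le (G : Type*) [Group G] (K : Subgroup G) (i : ℕ) :
    Subgroup.comap K.subtype (Subgroup.upperCentralSeries G i) ≤ Subgroup.upperCentralSeries K i := by
  induction i with
  | zero =>
    intro x hx
    simp only [upperCentralSeries_zero, Subgroup.mem_comap, Subgroup.mem_bot] at hx ⊢
    exact Subtype.ext hx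
  | succ i ih =>
    intro x hx
    simp only [Subgroup.mem_comap] at hx
    rw [mem_upperCentralSeries_succ_iff] at hx ⊢
    intro y
    exact ih (by rw [Subgroup.mem_comap]; exact hx (y : G))

/-- A monotone sequence of subgroups of a finite group has a stable point
beyond any given index. -/
lemma exists_stable {G : Type*} [Group G] [Finite G] (f : ℕ → Subgroup G)
    (hf : Monotone f) (n : ℕ) : ∃ m, n ≤ m ∧ f (m + 1) = f m := by
  by_contra h
  push_neg at h
  have hs : StrictMono (fun k => f (n + k)) := by
    apply strictMono_nat_of_lt_succ
    intro k
    have hne := h (n + k) (Nat.le_add_right n k)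
    have hle : f (n + k) ≤ f (n + k + 1) := hf (Nat.le_succ _)
    exact lt_of_le_of_ne hle (Ne.symm hne)
  have : Finite (Subgroup G) := inferInstance
  exact not_injective_infinite_finite _ hs.injective

/-- If `Z = Z_∞(G)` is the hypercentre of a finite group `G`
and `H ≤ G` is nilpotent, then `HZ` is nilpotent; consequently `Z` is
contained in every maximal nilpotent subgroup of `G`. -/
theorem hypercentre_le_maximal_nilpotent
    (G : Type*) [Group G] [Finite G] :
    (∀ H : Subgroup G, Group.IsNilpotent H →
      Group.IsNilpotent (H ⊔ hypercentre G : Subgroup G)) ∧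
    (∀ U : Subgroup G, IsMaxNilpotentSubgroup U → hypercentre G ≤ U) := by
  -- the hypercentre equals some finite stage of the upper central series
  obtain ⟨n, -, hn⟩ := exists_stable (Subgroup.upperCentralSeries G)
    (monotone_nat_of_le_succ (fun k => upperCentralSeries_mono G (Nat.le_succ k))) 0
  have hstep : ∀ a b : ℕ, Subgroup.upperCentralSeries G a = Subgroup.upperCentralSeries G b →
      Subgroup.upperCentralSeries G (a + 1) = Subgroup.upperCentralSeries G (b + 1) := by
    intro a b hab
    ext x
    rw [mem_upperCentralSeries_succ_iff, mem_upperCentralSeries_succ_iff, hab]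
  have hstable : ∀ m, n ≤ m → Subgroup.upperCentralSeries G m = Subgroup.upperCentralSeries G n := by
    intro m hm
    induction m, hm using Nat.le_induction with
    | base => rfl
    | succ m hm ih => rw [hstep m n ih, hn]
  have hZ : hypercentre G = Subgroup.upperCentralSeries G n := by
    apply le_antisymm
    · apply iSup_le
      intro m
      rcases le_or_gt m n with h | h
      · exact upperCentralSeries_mono G h
      · rw [← hstable m h.le]; exact le_rfl
    · exact le_iSup (Subgroup.upperCentralSeries G) n
  have main : ∀ H : Subgroup G, Group.IsNilpotent H →
      Group.IsNilpotent (H ⊔ hypercentre G : Subgroup G) := by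
    intro H hH
    set Z : Subgroup G := hypercentre G with hZdef
    set K : Subgroup G := H ⊔ Z with hKdef
    have hZnormal : (Subgroup.upperCentralSeries G n).Normal := inferInstance
    have hZK : Z ≤ K := le_sup_right
    -- Z (viewed inside K) is contained in Subgroup.upperCentralSeries K n
    have hZle : ∀ z : K, (z : G) ∈ Z → z ∈ Subgroup.upperCentralSeries K n := by
      intro z hz
      apply comap_upperCentralSeries_le G K n
      rw [Subgroup.mem_comap]
      rw [hZ] at hz
      exact hz
    -- find a stable stage of the upper central series of K beyond n
    obtain ⟨m, hnm, hm⟩ := exists_stable (Subgroup.upperCentralSeries K)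
      (monotone_nat_of_le_succ (fun k => upperCentralSeries_mono K (Nat.le_succ k))) n
    set N : Subgroup K := Subgroup.upperCentralSeries K m with hNdef
    have hNnormal : N.Normal := inferInstance
    -- the quotient K ⧸ N is a surjective image of H, hence nilpotent
    have hZN : ∀ z : K, (z : G) ∈ Z → z ∈ N := by
      intro z hz
      exact upperCentralSeries_mono K hnm (hZle z hz)
    have hsurj : Function.Surjective
        ((QuotientGroup.mk' N).comp (Subgroup.inclusion (le_sup_left : H ≤ K))) := by
      intro q
      obtain ⟨k, rfl⟩ := QuotientGroup.mk'_surjective N q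
      have hk : (k : G) ∈ H ⊔ Z := k.2
      rw [← SetLike.mem_coe, Subgroup.mul_normal (hN := hZ ▸ hZnormal)] at hk
      obtain ⟨h, hh, z, hz, hhz⟩ := hk
      refine ⟨⟨h, hh⟩, ?_⟩
      simp only [MonoidHom.comp_apply, QuotientGroup.mk'_apply]
      rw [QuotientGroup.eq]
      apply hZN
      show ((Subgroup.inclusion (le_sup_left : H ≤ K) ⟨h, hh⟩ : K) : G)⁻¹ * (k : G) ∈ Z
      have : ((Subgroup.inclusion (le_sup_left : H ≤ K) ⟨h, hh⟩ : K) : G) = h := rfl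
      rw [this, ← hhz]
      simpa using hz
    have hQnil : Group.IsNilpotent (K ⧸ N) := nilpotent_of_surjective _ hsurj
    -- the centre of K ⧸ N is trivial since the series has stabilised
    have hcenter : Subgroup.center (K ⧸ N) = ⊥ := by
      rw [eq_bot_iff]
      intro q hq
      obtain ⟨k, rfl⟩ := QuotientGroup.mk'_surjective N q
      have hk : k ∈ Subgroup.upperCentralSeries K (m + 1) := by
        rw [mem_upperCentralSeries_succ_iff]
        intro y
        have := (Subgroup.mem_center_iff.mp hq (QuotientGroup.mk' N y⁻¹)).symm
        rw [← map_mul, ← map_mul, QuotientGroup.mk'_apply, QuotientGroup.mk'_apply,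
          QuotientGroup.eq] at this
        have h2 : (k * y⁻¹)⁻¹ * (y⁻¹ * k) ∈ N := this
        have h3 : k * ((k * y⁻¹)⁻¹ * (y⁻¹ * k)) * k⁻¹ ∈ N := hNnormal.conj_mem _ h2 k
        have heq : k * ((k * y⁻¹)⁻¹ * (y⁻¹ * k)) * k⁻¹ = k * y * k⁻¹ * y⁻¹ := by group
        rw [heq] at h3
        exact h3
      rw [hm] at hk
      simp only [Subgroup.mem_bot]
      rw [QuotientGroup.mk'_apply, QuotientGroup.eq_one_iff]
      exact hk
    -- a nilpotent group with trivial centre is trivial, so N = ⊤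
    have htriv : ∀ i, Subgroup.upperCentralSeries (K ⧸ N) i = ⊥ := by
      intro i
      induction i with
      | zero => exact upperCentralSeries_zero _
      | succ i ih =>
        rw [eq_bot_iff]
        intro x hx
        rw [mem_upperCentralSeries_succ_iff] at hx
        rw [← hcenter]
        rw [Subgroup.mem_center_iff]
        intro y
        have := hx y
        rw [ih, Subgroup.mem_bot] at this
        have : x * y * x⁻¹ * y⁻¹ = 1 := this
        exact (commutatorElement_eq_one_iff_mul_comm.mp this).symm
    have hNtop : N = ⊤ := by
      obtain ⟨j, hj⟩ := hQnil.nilpotent'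
      rw [htriv j] at hj
      rw [eq_top_iff]
      intro k _
      rw [← QuotientGroup.eq_one_iff k]
      have : (QuotientGroup.mk' N k) ∈ (⊥ : Subgroup (K ⧸ N)) := hj ▸ Subgroup.mem_top _
      simpa using this
    exact ⟨m, hNdef ▸ hNtop⟩
  refine ⟨main, ?_⟩
  intro U hU
  have h1 := main U hU.1
  have h2 := hU.2 _ h1 le_sup_left
  rw [h2]
  exact le_sup_right
end

section
/- Let G be a finite group and let E be a normal p-subgroup of G contained in the hypercentre Z_∞(G). Then G/C_G(E) is a p-group. -/
/-- If `E` is a normal `p`-subgroup of a finite group `G` with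
`E ≤ Z_∞(G)`, then `G/C_G(E)` is a `p`-group.  (The centralizer of a normal
subgroup is normal; this always-true fact is recorded as an instance
assumption so that the quotient group makes sense.) -/
theorem quotient_centralizer_isPGroup
    (G : Type*) [Group G] [Finite G] (p : ℕ) [Fact p.Prime]
    (E : Subgroup G) [E.Normal] (hp : IsPGroup p E)
    (hE : E ≤ hypercentre G)
    [hc : (Subgroup.centralizer (E : Set G)).Normal] :
    IsPGroup p (G ⧸ Subgroup.centralizer (E : Set G)) := by
  classical
  have hp' : p.Prime := Fact.out
  set C := Subgroup.centralizer (E : Set G) with hCdef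
  -- Key: any element of order prime to p centralizes E.
  have key : ∀ g : G, ¬ p ∣ orderOf g → g ∈ C := by
    intro g hg
    have hcomm : ∀ n : ℕ, ∀ x, x ∈ E → x ∈ upperCentralSeries G n → g * x = x * g := by
      intro n
      induction n with
      | zero =>
        intro x _ hx
        change x ∈ Subgroup.upperCentralSeries G 0 at hx
        rw [Subgroup.upperCentralSeries_zero, Subgroup.mem_bot] at hx
        subst hx; simp
      | succ n ih =>
        intro x hxE hxZ
        set c : G := x⁻¹ * (g⁻¹ * x * g) with hc_def
        have hcE : c ∈ E := by
          refine mul_mem (inv_mem hxE) ?_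
          have := Subgroup.Normal.conj_mem ‹E.Normal› x hxE g⁻¹
          simpa [mul_assoc] using this
        have hcZ : c ∈ upperCentralSeries G n := by
          have hd : x * g⁻¹ * x⁻¹ * g ∈ upperCentralSeries G n := by
            have := (Subgroup.mem_upperCentralSeries_succ_iff).mp hxZ g⁻¹
            simp only [commutatorElement_def, inv_inv] at this
            exact this
          haveI : (upperCentralSeries G n).Normal := (inferInstance : (Subgroup.upperCentralSeries G n).Normal)
          have hconj : x⁻¹ * (x * g⁻¹ * x⁻¹ * g) * x⁻¹⁻¹ ∈ upperCentralSeries G n :=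
            Subgroup.Normal.conj_mem ‹(upperCentralSeries G n).Normal› _ hd x⁻¹
          have hinv : (x⁻¹ * (x * g⁻¹ * x⁻¹ * g) * x⁻¹⁻¹)⁻¹ ∈ upperCentralSeries G n :=
            inv_mem hconj
          have : (x⁻¹ * (x * g⁻¹ * x⁻¹ * g) * x⁻¹⁻¹)⁻¹ = c := by
            rw [hc_def]; group
          rwa [this] at hinv
        have hgc : g * c = c * g := ih c hcE hcZ
        have h1 : g⁻¹ * x * g = x * c := by rw [hc_def]; group
        have h2 : ∀ k : ℕ, g⁻¹ * c ^ k * g = c ^ k := by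
          intro k
          have : g * c ^ k = c ^ k * g := (Commute.pow_right hgc k)
          calc g⁻¹ * c ^ k * g = g⁻¹ * (c ^ k * g) := by rw [mul_assoc]
            _ = g⁻¹ * (g * c ^ k) := by rw [← this]
            _ = c ^ k := by group
        have pow : ∀ k : ℕ, g⁻¹ ^ k * x * g ^ k = x * c ^ k := by
          intro k
          induction k with
          | zero => simp
          | succ k ihk =>
            calc g⁻¹ ^ (k+1) * x * g ^ (k+1)
                = g⁻¹ * (g⁻¹ ^ k * x * g ^ k) * g := by group
              _ = g⁻¹ * (x * c ^ k) * g := by rw [ihk]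
              _ = (g⁻¹ * x * g) * (g⁻¹ * c ^ k * g) := by group
              _ = (x * c) * c ^ k := by rw [h1, h2]
              _ = x * c ^ (k+1) := by rw [pow_succ]; group
        have hgord : g ^ orderOf g = 1 := pow_orderOf_eq_one g
        have hx1 : x = x * c ^ orderOf g := by
          have := pow (orderOf g)
          rwa [inv_pow, hgord, inv_one, one_mul, mul_one] at this
        have hcord : c ^ orderOf g = 1 := by
          have := hx1.symm
          rwa [mul_eq_left] at this
        have hdvd1 : orderOf c ∣ orderOf g := orderOf_dvd_of_pow_eq_one hcord
        obtain ⟨k, hk⟩ := hp ⟨c, hcE⟩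
        have hck : c ^ p ^ k = 1 := by
          have := congrArg (Subtype.val) hk
          simpa using this
        have hdvd2 : orderOf c ∣ p ^ k := orderOf_dvd_of_pow_eq_one hck
        have hcop : Nat.Coprime (p ^ k) (orderOf g) :=
          Nat.Coprime.pow_left k ((Nat.Prime.coprime_iff_not_dvd hp').mpr hg)
        have : orderOf c ∣ 1 := hcop ▸ Nat.dvd_gcd hdvd2 hdvd1
        have hc1 : c = 1 := orderOf_eq_one_iff.mp (Nat.dvd_one.mp this)
        have : g⁻¹ * x * g = x := by rw [h1, hc1, mul_one]
        calc g * x = g * (g⁻¹ * x * g) := by rw [this]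
          _ = x * g := by group
    rw [hCdef, Subgroup.mem_centralizer_iff]
    intro x hxE
    obtain ⟨n, hn⟩ := (Subgroup.mem_iSup_of_directed
      ((upperCentralSeries_mono G).directed_le)).mp (hE hxE)
    exact (hcomm n x hxE hn).symm
  -- Now show the quotient has p-power order.
  rw [IsPGroup.iff_card]
  have hne : Nat.card (G ⧸ C) ≠ 0 := Nat.card_pos.ne'
  refine ⟨_, Nat.eq_prime_pow_of_unique_prime_dvd hne ?_⟩
  intro q hq hdvd
  by_contra hqp
  haveI : Fact q.Prime := ⟨hq⟩
  obtain ⟨Q⟩ : Nonempty (Sylow q G) := inferInstance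
  have hQC : (Q : Subgroup G) ≤ C := by
    intro g hgQ
    apply key
    intro hpd
    obtain ⟨m, hm⟩ := Q.2 ⟨g, hgQ⟩
    have hgm : g ^ q ^ m = 1 := by
      have := congrArg (Subtype.val) hm
      simpa using this
    have : p ∣ q ^ m := hpd.trans (orderOf_dvd_of_pow_eq_one hgm)
    have hpq : p = q := (Nat.prime_dvd_prime_iff_eq hp' hq).mp (hp'.dvd_of_dvd_pow this)
    exact hqp hpq.symm
  have hidx : C.index ∣ (Q : Subgroup G).index := Subgroup.index_dvd_of_le hQC
  have hcard : Nat.card (G ⧸ C) = C.index := rfl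
  exact Sylow.not_dvd_index Q ((hcard ▸ hdvd).trans hidx)
end
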